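/- arXiv:1402.6539 — 6 statements merged into one kernel-verified Lean document; each statement's English description precedes it below -/
import Mathlib

section
/- For every natural number n ≥ 1, the function F_n(t) = Σ_{k=0}^{n} (C(n,k) t^k (1-t)^{n-k})² is convex on the interval [0,1]. -/
/-- The sum of the squared Bernstein basis polynomials:
`F_n(t) = ∑_{k=0}^{n} (C(n,k) t^k (1-t)^{n-k})²`. -/
noncomputable def bernsteinSqSum (n : ℕ) (t : ℝ) : ℝ :=
  ∑ k ∈ Finset.range (n + 1), ((n.choose k : ℝ) * t ^ k * (1 - t) ^ (n - k)) ^ 2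

open Finset

/-- A finite sum of functions convex on a set is convex on that set. -/
lemma convexOn_finset_sum {ι : Type*} (s : Finset ι) (f : ι → ℝ → ℝ)
    (h : ∀ i ∈ s, ConvexOn ℝ (Set.Icc (0 : ℝ) 1) (f i)) :
    ConvexOn ℝ (Set.Icc (0 : ℝ) 1) (fun t => ∑ i ∈ s, f i t) := by
  induction s using Finset.cons_induction with
  | empty => simpa using convexOn_const (0 : ℝ) (convex_Icc (0 : ℝ) 1)
  | cons i s hi ih =>
    simp only [Finset.sum_cons]
    exact (h i (Finset.mem_cons_self _ _)).add (ih fun j hj => h j (Finset.mem_cons_of_mem hj))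

/-- For `0 ≤ c ≤ 4`, the function `t ↦ (1 - c·t(1-t))^n` is convex on `[0,1]`. -/
lemma convex_piece (n : ℕ) (c : ℝ) (hc0 : 0 ≤ c) (hc4 : c ≤ 4) :
    ConvexOn ℝ (Set.Icc (0 : ℝ) 1) (fun t => (1 - c * (t * (1 - t))) ^ n) := by
  have hnn : ∀ t : ℝ, t ∈ Set.Icc (0 : ℝ) 1 → 0 ≤ 1 - c * (t * (1 - t)) := by
    intro t ht
    obtain ⟨h0, h1⟩ := ht
    nlinarith [sq_nonneg (2 * t - 1), mul_nonneg hc0 (sq_nonneg (2 * t - 1))]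
  refine ⟨convex_Icc 0 1, fun x hx y hy a b ha hb hab => ?_⟩
  simp only [smul_eq_mul]
  have hz : a * x + b * y ∈ Set.Icc (0 : ℝ) 1 := (convex_Icc (0:ℝ) 1) hx hy ha hb hab
  have h1 : 1 - c * ((a * x + b * y) * (1 - (a * x + b * y)))
      ≤ a * (1 - c * (x * (1 - x))) + b * (1 - c * (y * (1 - y))) := by
    have hb' : b = 1 - a := by linarith
    have key : a * (1 - c * (x * (1 - x))) + b * (1 - c * (y * (1 - y)))
        - (1 - c * ((a * x + b * y) * (1 - (a * x + b * y)))) = c * (a * b) * (x - y) ^ 2 := by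
      subst hb'; ring
    nlinarith [mul_nonneg (mul_nonneg hc0 (mul_nonneg ha hb)) (sq_nonneg (x - y))]
  have h0 : (0 : ℝ) ≤ 1 - c * ((a * x + b * y) * (1 - (a * x + b * y))) := hnn _ hz
  calc (1 - c * ((a * x + b * y) * (1 - (a * x + b * y)))) ^ n
      ≤ (a * (1 - c * (x * (1 - x))) + b * (1 - c * (y * (1 - y)))) ^ n :=
        pow_le_pow_left₀ h0 h1 n
    _ ≤ a * (1 - c * (x * (1 - x))) ^ n + b * (1 - c * (y * (1 - y))) ^ n := by
        have := (convexOn_pow n).2 (Set.mem_Ici.2 (hnn x hx)) (Set.mem_Ici.2 (hnn y hy))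
          ha hb hab
        simpa [smul_eq_mul] using this

/-- If `|w| = 1` (as `normSq w = 1`), then
`normSq (t·w + (1-t)) = 1 - 2(1 - Re w)·t(1-t)`. -/
lemma normSq_line (w : ℂ) (hw : Complex.normSq w = 1) (t : ℝ) :
    Complex.normSq ((t : ℂ) * w + (1 - (t : ℂ))) = 1 - 2 * (1 - w.re) * (t * (1 - t)) := by
  have hw' : w.re * w.re + w.im * w.im = 1 := by
    simpa [Complex.normSq_apply] using hw
  simp only [Complex.normSq_apply, Complex.add_re, Complex.add_im, Complex.mul_re,
    Complex.mul_im, Complex.ofReal_re, Complex.ofReal_im, Complex.sub_re, Complex.sub_im,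
    Complex.one_re, Complex.one_im]
  linear_combination (t ^ 2) * hw'

/-- Key identity: `(2n+1)·F_n(t) = ∑_{j<2n+1} (1 - c_j·t(1-t))^n` with
`c_j = 2(1 - cos(2πj/(2n+1)))`. -/
lemma key_identity (n : ℕ) (t : ℝ) :
    (2 * n + 1 : ℝ) * bernsteinSqSum n t =
      ∑ j ∈ Finset.range (2 * n + 1),
        (1 - 2 * (1 - ((Complex.exp (2 * Real.pi * Complex.I / (2 * n + 1))) ^ j).re)
          * (t * (1 - t))) ^ n := by
  set N : ℕ := 2 * n + 1 with hN
  have hNne : N ≠ 0 := by omega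
  set ζ : ℂ := Complex.exp (2 * Real.pi * Complex.I / (2 * n + 1)) with hζ
  have hprim : IsPrimitiveRoot ζ N := by
    have h := Complex.isPrimitiveRoot_exp N hNne
    have hc : ((N : ℕ) : ℂ) = 2 * (n : ℂ) + 1 := by push_cast [hN]; ring
    rw [hc] at h
    rw [hζ]
    exact h
  have hζN : ζ ^ N = 1 := hprim.pow_eq_one
  have habs : ‖ζ‖ = 1 := Complex.norm_eq_one_of_pow_eq_one hζN hNne
  have habs' : ‖ζ‖ = 1 := habs
  have hnsq : Complex.normSq ζ = 1 := by
    rw [Complex.normSq_eq_norm_sq, habs', one_pow]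
  have hnsqj : ∀ j : ℕ, Complex.normSq (ζ ^ j) = 1 := by
    intro j
    rw [map_pow, hnsq, one_pow]
  have hζ0 : ζ ≠ 0 := hprim.ne_zero hNne
  have hconj : (starRingEnd ℂ) ζ = ζ⁻¹ := by
    apply eq_inv_of_mul_eq_one_left
    rw [mul_comm, Complex.mul_conj, hnsq, Complex.ofReal_one]
  -- coefficients
  set a : ℕ → ℝ := fun k => (n.choose k : ℝ) * t ^ k * (1 - t) ^ (n - k) with ha
  -- binomial expansion
  have expand : ∀ w : ℂ, ((t : ℂ) * w + (1 - (t : ℂ))) ^ n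
      = ∑ k ∈ Finset.range (n + 1), (a k : ℂ) * w ^ k := by
    intro w
    rw [add_pow]
    refine Finset.sum_congr rfl fun k hk => ?_
    have : (a k : ℂ) = (n.choose k : ℂ) * (t : ℂ) ^ k * (1 - (t : ℂ)) ^ (n - k) := by
      push_cast [ha]
      ring
    rw [this]
    ring
  -- orthogonality
  have horth : ∀ k ∈ Finset.range (n + 1), ∀ l ∈ Finset.range (n + 1),
      (∑ j ∈ Finset.range N, (ζ ^ k * ((starRingEnd ℂ) ζ) ^ l) ^ j)
        = if k = l then (N : ℂ) else 0 := by
    intro k hk l hl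
    rw [Finset.mem_range] at hk hl
    by_cases hkl : k = l
    · subst hkl
      rw [if_pos rfl]
      have : ζ ^ k * ((starRingEnd ℂ) ζ) ^ k = 1 := by
        rw [← mul_pow, Complex.mul_conj, hnsq, Complex.ofReal_one, one_pow]
      rw [this]
      simp
    · rw [if_neg hkl]
      set w : ℂ := ζ ^ k * ((starRingEnd ℂ) ζ) ^ l with hw
      have hwN : w ^ N = 1 := by
        rw [hw, mul_pow, ← pow_mul, ← pow_mul, mul_comm k N, mul_comm l N, pow_mul, pow_mul,
          hζN, ← map_pow, hζN, map_one, one_pow, one_pow, one_mul]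
      have hw1 : w ≠ 1 := by
        intro h
        have h2 : ζ ^ k = ζ ^ l := by
          rw [hw, hconj, inv_pow, mul_inv_eq_one₀ (pow_ne_zero _ hζ0)] at h
          exact h
        have hzpow : ζ ^ ((k : ℤ) - (l : ℤ)) = 1 := by
          rw [zpow_sub₀ hζ0, zpow_natCast, zpow_natCast, h2,
            div_self (pow_ne_zero _ hζ0)]
        rw [hprim.zpow_eq_one_iff_dvd] at hzpow
        have := Int.eq_zero_of_dvd_of_natAbs_lt_natAbs hzpow (by omega : ((k:ℤ) - l).natAbs < (N:ℤ).natAbs)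
        omega
      rw [geom_sum_eq hw1, hwN, sub_self, zero_div]
  -- rewrite summands of the RHS as normSq powers
  have hRHS : ∀ j : ℕ,
      (1 - 2 * (1 - (ζ ^ j).re) * (t * (1 - t))) ^ n
        = Complex.normSq (((t : ℂ) * ζ ^ j + (1 - (t : ℂ))) ^ n) := by
    intro j
    rw [map_pow, normSq_line _ (hnsqj j)]
  -- the complex computation
  have hmain : ∑ j ∈ Finset.range N,
      (((t : ℂ) * ζ ^ j + (1 - (t : ℂ))) ^ n
        * (starRingEnd ℂ) (((t : ℂ) * ζ ^ j + (1 - (t : ℂ))) ^ n))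
      = (N : ℂ) * ∑ k ∈ Finset.range (n + 1), (a k : ℂ) ^ 2 := by
    have step1 : ∀ j : ℕ, ((t : ℂ) * ζ ^ j + (1 - (t : ℂ))) ^ n
        * (starRingEnd ℂ) (((t : ℂ) * ζ ^ j + (1 - (t : ℂ))) ^ n)
        = ∑ k ∈ Finset.range (n + 1), ∑ l ∈ Finset.range (n + 1),
            (a k : ℂ) * (a l : ℂ) * (ζ ^ k * ((starRingEnd ℂ) ζ) ^ l) ^ j := by
      intro j
      rw [expand (ζ ^ j), map_sum, Finset.sum_mul_sum]
      refine Finset.sum_congr rfl fun k _ => Finset.sum_congr rfl fun l _ => ?_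
      rw [map_mul, map_pow, map_pow, Complex.conj_ofReal]
      rw [show ((ζ : ℂ) ^ j) ^ k = (ζ ^ k) ^ j by rw [← pow_mul, ← pow_mul, mul_comm]]
      rw [show (((starRingEnd ℂ) ζ) ^ j) ^ l = (((starRingEnd ℂ) ζ) ^ l) ^ j by
        rw [← pow_mul, ← pow_mul, mul_comm]]
      rw [mul_pow]
      ring
    calc ∑ j ∈ Finset.range N, (((t : ℂ) * ζ ^ j + (1 - (t : ℂ))) ^ n
          * (starRingEnd ℂ) (((t : ℂ) * ζ ^ j + (1 - (t : ℂ))) ^ n))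
        = ∑ j ∈ Finset.range N, ∑ k ∈ Finset.range (n + 1), ∑ l ∈ Finset.range (n + 1),
            (a k : ℂ) * (a l : ℂ) * (ζ ^ k * ((starRingEnd ℂ) ζ) ^ l) ^ j :=
          Finset.sum_congr rfl fun j _ => step1 j
      _ = ∑ k ∈ Finset.range (n + 1), ∑ l ∈ Finset.range (n + 1),
            (a k : ℂ) * (a l : ℂ) * ∑ j ∈ Finset.range N,
              (ζ ^ k * ((starRingEnd ℂ) ζ) ^ l) ^ j := by
          rw [Finset.sum_comm]
          refine Finset.sum_congr rfl fun k _ => ?_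
          rw [Finset.sum_comm]
          refine Finset.sum_congr rfl fun l _ => ?_
          rw [Finset.mul_sum]
      _ = ∑ k ∈ Finset.range (n + 1), ∑ l ∈ Finset.range (n + 1),
            (a k : ℂ) * (a l : ℂ) * (if k = l then (N : ℂ) else 0) := by
          refine Finset.sum_congr rfl fun k hk => Finset.sum_congr rfl fun l hl => ?_
          rw [horth k hk l hl]
      _ = (N : ℂ) * ∑ k ∈ Finset.range (n + 1), (a k : ℂ) ^ 2 := by
          rw [Finset.mul_sum]
          refine Finset.sum_congr rfl fun k hk => ?_
          rw [Finset.sum_eq_single k]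
          · rw [if_pos rfl]; ring
          · intro l _ hlk
            rw [if_neg (Ne.symm hlk), mul_zero]
          · intro h
            exact absurd hk h
  -- conclude by coercion to ℂ
  have hL : (((2 * n + 1 : ℝ) * bernsteinSqSum n t : ℝ) : ℂ)
      = (N : ℂ) * ∑ k ∈ Finset.range (n + 1), (a k : ℂ) ^ 2 := by
    rw [bernsteinSqSum]
    push_cast [ha, hN]
    ring
  have hR : ((∑ j ∈ Finset.range N, (1 - 2 * (1 - (ζ ^ j).re) * (t * (1 - t))) ^ n : ℝ) : ℂ)
      = ∑ j ∈ Finset.range N, (((t : ℂ) * ζ ^ j + (1 - (t : ℂ))) ^ n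
          * (starRingEnd ℂ) (((t : ℂ) * ζ ^ j + (1 - (t : ℂ))) ^ n)) := by
    rw [Complex.ofReal_sum]
    refine Finset.sum_congr rfl fun j _ => ?_
    rw [hRHS j, Complex.mul_conj]
  exact Complex.ofReal_injective (by rw [hL, hR, hmain])

theorem rasa_conjecture (n : ℕ) (hn : 1 ≤ n) :
    ConvexOn ℝ (Set.Icc (0 : ℝ) 1) (bernsteinSqSum n) := by
  have hfun : bernsteinSqSum n = fun t =>
      (1 / (2 * n + 1 : ℝ)) • ∑ j ∈ Finset.range (2 * n + 1),
        (1 - 2 * (1 - ((Complex.exp (2 * Real.pi * Complex.I / (2 * n + 1))) ^ j).re)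
          * (t * (1 - t))) ^ n := by
    funext t
    have h := key_identity n t
    have hpos : (2 * n + 1 : ℝ) ≠ 0 := by positivity
    rw [smul_eq_mul, ← h]
    field_simp
  rw [hfun]
  refine ConvexOn.smul (by positivity) ?_
  apply convexOn_finset_sum
  intro j _
  set ζ : ℂ := Complex.exp (2 * Real.pi * Complex.I / (2 * n + 1)) with hζ
  have hNne : (2 * n + 1 : ℕ) ≠ 0 := by omega
  have hprim : IsPrimitiveRoot ζ (2 * n + 1) := by
    have h := Complex.isPrimitiveRoot_exp (2 * n + 1) hNne
    have hc : (((2 * n + 1 : ℕ)) : ℂ) = 2 * (n : ℂ) + 1 := by push_cast; ring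
    rw [hc] at h
    rw [hζ]
    exact h
  have habs : ‖ζ ^ j‖ = 1 := by
    rw [norm_pow, Complex.norm_eq_one_of_pow_eq_one hprim.pow_eq_one hNne, one_pow]
  have hre : |(ζ ^ j).re| ≤ 1 := by
    calc |(ζ ^ j).re| ≤ ‖ζ ^ j‖ := Complex.abs_re_le_norm _
      _ = 1 := habs
  rw [abs_le] at hre
  exact convex_piece n _ (by linarith [hre.2]) (by linarith [hre.1])
end

section
/- Let n ∈ ℕ, t ∈ [0, 1/2), and set x = x(t) = (1/2)(1-2t + 1/(1-2t)). Then x ≥ 1, 1-2t = x - √(x²-1), and F_n(t) = (x - √(x²-1))^n P_n(x), where F_n(t) = Σ_{k=0}^{n} (C(n,k) t^k (1-t)^{n-k})² and P_n is the n-th Legendre polynomial. -/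
/-- The `n`-th Legendre polynomial, via Rodrigues' formula
`P_n(x) = (1/(2^n n!)) dⁿ/dxⁿ (x²-1)ⁿ`. -/
noncomputable def legendreP (n : ℕ) : ℝ → ℝ := fun x =>
  (1 / (2 ^ n * (n.factorial : ℝ))) * iteratedDeriv n (fun y => (y ^ 2 - 1) ^ n) x

open Polynomial in
theorem iterDeriv_eval' (p : ℝ[X]) (k : ℕ) :
    iteratedDeriv k (fun y => p.eval y) = fun x => (derivative^[k] p).eval x := by
  induction k generalizing p with
  | zero => simp
  | succ k ih =>
    rw [iteratedDeriv_succ', Function.iterate_succ_apply]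
    have h : (deriv fun y => p.eval y) = fun y => (derivative p).eval y :=
      funext fun y => Polynomial.deriv p
    rw [h, ih (derivative p)]

theorem natid' (n k : ℕ) (hk : k ≤ n) :
    n.choose k * n.descFactorial (n - k) * n.descFactorial k = n.factorial * n.choose k ^ 2 := by
  rw [Nat.descFactorial_eq_factorial_mul_choose, Nat.descFactorial_eq_factorial_mul_choose,
    Nat.choose_symm hk, ← Nat.choose_mul_factorial_mul_factorial hk]; ring

open Polynomial in
theorem legendreP_eq' (n : ℕ) (x : ℝ) :
    legendreP n x = (1 / 2 ^ n) *
      ∑ k ∈ Finset.range (n + 1), (n.choose k : ℝ) ^ 2 * (x - 1) ^ k * (x + 1) ^ (n - k) := by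
  unfold legendreP
  have hf : (fun y : ℝ => (y ^ 2 - 1) ^ n) = fun y => (((X : ℝ[X]) ^ 2 - 1) ^ n).eval y := by
    funext y; simp
  rw [hf, iterDeriv_eval']
  have h2 : ((X : ℝ[X]) ^ 2 - 1) ^ n = (X - C 1) ^ n * (X + C 1) ^ n := by
    rw [← mul_pow]; congr 1; simp; ring
  rw [h2, Polynomial.iterate_derivative_mul]
  simp only [iterate_derivative_X_sub_pow, iterate_derivative_X_add_pow, eval_finset_sum,
    eval_smul, smul_eq_mul, eval_mul, eval_pow, eval_sub, eval_add, eval_X, eval_C,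
    smul_mul_assoc, nsmul_eq_mul, eval_natCast]
  rw [Finset.mul_sum, Finset.mul_sum]
  refine Finset.sum_congr rfl fun k hk => ?_
  have hkn : k ≤ n := Nat.lt_succ_iff.mp (Finset.mem_range.mp hk)
  rw [Nat.sub_sub_self hkn]
  have hfac : (0 : ℝ) < n.factorial := by positivity
  have : ((n.choose k : ℝ)) * (n.descFactorial (n - k) : ℝ) * (n.descFactorial k : ℝ)
      = (n.factorial : ℝ) * (n.choose k : ℝ) ^ 2 := by exact_mod_cast natid' n k hkn
  field_simp
  linear_combination ((x - 1) ^ k * (x + 1) ^ (n - k)) * this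

theorem bernsteinSqSum_eq_legendre (n : ℕ) (t x : ℝ) (ht : t ∈ Set.Ico (0 : ℝ) (1 / 2))
    (hx : x = (1 / 2) * (1 - 2 * t + 1 / (1 - 2 * t))) :
    1 ≤ x ∧ 1 - 2 * t = x - Real.sqrt (x ^ 2 - 1) ∧
      bernsteinSqSum n t = (x - Real.sqrt (x ^ 2 - 1)) ^ n * legendreP n x := by
  obtain ⟨ht0, ht2⟩ := ht
  have hu0 : (0 : ℝ) < 1 - 2 * t := by linarith
  have hu1 : (1 : ℝ) - 2 * t ≤ 1 := by linarith
  have hune : (1 : ℝ) - 2 * t ≠ 0 := ne_of_gt hu0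
  have hx1 : x - 1 = 2 * t ^ 2 / (1 - 2 * t) := by
    rw [hx]; field_simp; ring
  have hx2 : x + 1 = 2 * (1 - t) ^ 2 / (1 - 2 * t) := by
    rw [hx]; field_simp; ring
  have hsq : x ^ 2 - 1 = (2 * t * (1 - t) / (1 - 2 * t)) ^ 2 := by
    rw [hx]; field_simp; ring
  have hroot : Real.sqrt (x ^ 2 - 1) = 2 * t * (1 - t) / (1 - 2 * t) := by
    rw [hsq, Real.sqrt_sq]
    apply div_nonneg _ (by linarith)
    nlinarith
  have hxu : x - Real.sqrt (x ^ 2 - 1) = 1 - 2 * t := by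
    rw [hroot, hx]; field_simp; ring
  refine ⟨?_, hxu.symm, ?_⟩
  · have hnn : (0:ℝ) ≤ 2 * t ^ 2 / (1 - 2 * t) :=
      div_nonneg (by positivity) (by linarith)
    linarith
  · rw [hxu, legendreP_eq' n x]
    unfold bernsteinSqSum
    rw [Finset.mul_sum, Finset.mul_sum]
    refine Finset.sum_congr rfl fun k hk => ?_
    have hkn : k ≤ n := Nat.lt_succ_iff.mp (Finset.mem_range.mp hk)
    obtain ⟨m, rfl⟩ : ∃ m, n = k + m := ⟨n - k, (Nat.add_sub_cancel' hkn).symm⟩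
    rw [hx1, hx2, Nat.add_sub_cancel_left]
    simp only [pow_add, div_pow, mul_pow, ← pow_mul]
    field_simp
    have hune' : (1:ℝ) - t * 2 ≠ 0 := fun h => hune (by linarith)
    have e1 : (1 - t * 2)⁻¹ ^ k * (1 - t * 2) ^ k = 1 := by rw [← mul_pow, inv_mul_cancel₀ hune', one_pow]
    have e2 : (1 - t * 2)⁻¹ ^ m * (1 - t * 2) ^ m = 1 := by rw [← mul_pow, inv_mul_cancel₀ hune', one_pow]
    linear_combination (-(((k + m).choose k : ℝ) ^ 2 * t ^ (k * 2) * (1 - t) ^ (m * 2))) * ((1 - t * 2)⁻¹ ^ m * (1 - t * 2) ^ m) * e1 - (((k + m).choose k : ℝ) ^ 2 * t ^ (k * 2) * (1 - t) ^ (m * 2)) * e2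
end

section
/- Let n ∈ ℕ, t ∈ [0, 1/2), and set x = x(t) = (1/2)(1-2t + 1/(1-2t)). Then the first derivative of F_n satisfies F_n'(t) = 2 (x - √(x²-1))^{n-1} (√(x²-1) P_n'(x) - n P_n(x)), where F_n(t) = Σ_{k=0}^{n} (C(n,k) t^k (1-t)^{n-k})² and P_n is the n-th Legendre polynomial. -/
open Polynomial Finset

noncomputable def legPoly (n : ℕ) : ℝ[X] :=
  Polynomial.C (1 / (2 ^ n * (n.factorial : ℝ))) * derivative^[n] ((X ^ 2 - 1) ^ n)

lemma iteratedDeriv_eval (p : ℝ[X]) (n : ℕ) :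
    iteratedDeriv n (fun x => p.eval x) = fun x => (derivative^[n] p).eval x := by
  induction n with
  | zero => simp
  | succ n ih =>
    rw [iteratedDeriv_succ, ih, Function.iterate_succ_apply']
    funext x
    exact Polynomial.deriv _

lemma legendreP_eq (n : ℕ) : legendreP n = fun x => (legPoly n).eval x := by
  funext x
  simp only [legendreP, legPoly, eval_mul, eval_C]
  congr 1
  have h : (fun y : ℝ => (y ^ 2 - 1) ^ n) = fun y => (((X ^ 2 - 1 : ℝ[X])) ^ n).eval y := by
    funext y; simp
  rw [h, iteratedDeriv_eval]

lemma coeff_nat (n k : ℕ) (hk : k ≤ n) :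
    n.choose k * n.descFactorial (n - k) * n.descFactorial k = n.choose k ^ 2 * n.factorial := by
  rw [Nat.descFactorial_eq_factorial_mul_choose, Nat.descFactorial_eq_factorial_mul_choose,
    Nat.choose_symm hk]
  have h := Nat.choose_mul_factorial_mul_factorial hk
  ring_nf
  ring_nf at h
  nlinarith [h]

lemma legendreP_sum (n : ℕ) (x : ℝ) :
    legendreP n x = (1 / 2 ^ n) * ∑ k ∈ range (n + 1),
      ((n.choose k : ℝ)) ^ 2 * (x - 1) ^ k * (x + 1) ^ (n - k) := by
  have hfac : ((X : ℝ[X]) ^ 2 - 1) ^ n = (X - C 1) ^ n * (X + C 1) ^ n := by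
    rw [← mul_pow]; congr 1; simp only [map_one]; ring
  have := legendreP_eq n
  rw [show legendreP n x = (legPoly n).eval x from by rw [legendreP_eq]]
  rw [legPoly, hfac, Polynomial.iterate_derivative_mul]
  simp only [Polynomial.iterate_derivative_X_sub_pow, Polynomial.iterate_derivative_X_add_pow,
    eval_mul, eval_C, eval_finset_sum, Finset.mul_sum]
  refine Finset.sum_congr rfl fun k hk => ?_
  have hkn : k ≤ n := by
    have := Finset.mem_range.mp hk; omega
  have hnn : n - (n - k) = k := by omega
  simp only [smul_mul_assoc, eval_smul, eval_mul, eval_smul, eval_pow, eval_sub, eval_add,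
    eval_X, eval_one, eval_C, smul_eq_mul, nsmul_eq_mul, hnn, eval_natCast]
  have hcoeff : ((n.choose k : ℝ)) * (n.descFactorial (n - k) : ℝ) * (n.descFactorial k : ℝ)
      = (n.choose k : ℝ) ^ 2 * (n.factorial : ℝ) := by
    have := coeff_nat n k hkn
    exact_mod_cast congrArg (fun m : ℕ => (m : ℝ)) this
  have hfne : (n.factorial : ℝ) ≠ 0 := Nat.cast_ne_zero.mpr n.factorial_ne_zero
  have h2 : (2 : ℝ) ^ n ≠ 0 := by positivity
  field_simp
  linear_combination ((x - 1) ^ k * (x + 1) ^ (n - k)) * hcoeff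

lemma bernstein_eq (n : ℕ) (s : ℝ) (hs : s < 1 / 2) :
    bernsteinSqSum n s
      = (1 - 2 * s) ^ n * legendreP n ((1 / 2) * (1 - 2 * s + 1 / (1 - 2 * s))) := by
  have hu : (1 : ℝ) - 2 * s ≠ 0 := by nlinarith
  set xx : ℝ := (1 / 2) * (1 - 2 * s + 1 / (1 - 2 * s)) with hxx
  have h1 : ((1 - 2 * s) / 2) * (xx - 1) = s ^ 2 := by
    rw [hxx]; field_simp; ring
  have h2 : ((1 - 2 * s) / 2) * (xx + 1) = (1 - s) ^ 2 := by
    rw [hxx]; field_simp; ring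
  rw [legendreP_sum, bernsteinSqSum, ← mul_assoc, Finset.mul_sum]
  refine Finset.sum_congr rfl fun k hk => ?_
  have hkn : k ≤ n := by have := Finset.mem_range.mp hk; omega
  have hsplit : (1 - 2 * s) ^ n * (1 / 2 ^ n)
      = ((1 - 2 * s) / 2) ^ k * ((1 - 2 * s) / 2) ^ (n - k) := by
    rw [← pow_add, Nat.add_sub_cancel' hkn, div_pow]; ring
  calc ((n.choose k : ℝ) * s ^ k * (1 - s) ^ (n - k)) ^ 2
      = (n.choose k : ℝ) ^ 2 * (s ^ 2) ^ k * ((1 - s) ^ 2) ^ (n - k) := by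
        rw [mul_pow, mul_pow, ← pow_right_comm s, ← pow_right_comm (1 - s)]
    _ = (n.choose k : ℝ) ^ 2 * (((1 - 2 * s) / 2) * (xx - 1)) ^ k
          * (((1 - 2 * s) / 2) * (xx + 1)) ^ (n - k) := by rw [h1, h2]
    _ = (1 - 2 * s) ^ n * (1 / 2 ^ n)
          * ((n.choose k : ℝ) ^ 2 * (xx - 1) ^ k * (xx + 1) ^ (n - k)) := by
        rw [mul_pow, mul_pow, hsplit]; ring

theorem deriv_bernsteinSqSum_eq (n : ℕ) (t x : ℝ) (ht : t ∈ Set.Ico (0 : ℝ) (1 / 2))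
    (hx : x = (1 / 2) * (1 - 2 * t + 1 / (1 - 2 * t))) :
    deriv (bernsteinSqSum n) t =
      2 * (x - Real.sqrt (x ^ 2 - 1)) ^ ((n : ℝ) - 1) *
        (Real.sqrt (x ^ 2 - 1) * deriv (legendreP n) x - (n : ℝ) * legendreP n x) := by
  obtain ⟨ht0, ht1⟩ := ht
  have hu0 : (0 : ℝ) < 1 - 2 * t := by linarith
  have hu1 : (1 : ℝ) - 2 * t ≤ 1 := by linarith
  have hu : (1 : ℝ) - 2 * t ≠ 0 := hu0.ne'
  -- sqrt computations
  have hsq : x ^ 2 - 1 = (((1 - 2 * t)⁻¹ - (1 - 2 * t)) / 2) ^ 2 := by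
    rw [hx]; field_simp; ring
  have hs0 : (0 : ℝ) ≤ ((1 - 2 * t)⁻¹ - (1 - 2 * t)) / 2 := by
    have h1 : (1 : ℝ) ≤ (1 - 2 * t)⁻¹ := (one_le_inv_iff₀.mpr ⟨hu0, hu1⟩)
    linarith
  have hsqrt : Real.sqrt (x ^ 2 - 1) = ((1 - 2 * t)⁻¹ - (1 - 2 * t)) / 2 := by
    rw [hsq, Real.sqrt_sq hs0]
  have hxs : x - Real.sqrt (x ^ 2 - 1) = 1 - 2 * t := by
    rw [hsqrt, hx]; field_simp; ring
  -- eventual equality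
  have hev : bernsteinSqSum n =ᶠ[nhds t]
      fun s => (1 - 2 * s) ^ n * legendreP n ((1 / 2) * (1 - 2 * s + 1 / (1 - 2 * s))) := by
    filter_upwards [Iio_mem_nhds ht1] with s hs
    exact bernstein_eq n s hs
  rw [hev.deriv_eq]
  -- derivative computation
  have hlin : HasDerivAt (fun s : ℝ => 1 - 2 * s) (-2) t := by
    simpa using ((hasDerivAt_id t).const_mul (2 : ℝ)).const_sub 1
  have hpow : HasDerivAt (fun s : ℝ => (1 - 2 * s) ^ n)
      ((n : ℝ) * (1 - 2 * t) ^ (n - 1) * (-2)) t := hlin.pow n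
  have hX : HasDerivAt (fun s : ℝ => (1 / 2) * (1 - 2 * s + 1 / (1 - 2 * s)))
      ((1 / 2) * (-2 + -(-2) / (1 - 2 * t) ^ 2)) t := by
    have h := (hlin.add (hlin.inv hu)).const_mul ((1 : ℝ) / 2)
    have e : (fun s : ℝ => (1 / 2) * (1 - 2 * s + 1 / (1 - 2 * s)))
        = fun s : ℝ => (1 / 2 : ℝ) * (1 - 2 * s + (1 - 2 * s)⁻¹) := by
      funext s; norm_num
    rw [e]; exact h
  have hdiff : Differentiable ℝ (legendreP n) := by
    rw [legendreP_eq]; exact (legPoly n).differentiable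
  have hP : HasDerivAt (legendreP n)
      (deriv (legendreP n) ((1 / 2) * (1 - 2 * t + 1 / (1 - 2 * t))))
      ((1 / 2) * (1 - 2 * t + 1 / (1 - 2 * t))) :=
    (hdiff _).hasDerivAt
  have hcomp : HasDerivAt
      (fun s : ℝ => legendreP n ((1 / 2) * (1 - 2 * s + 1 / (1 - 2 * s))))
      (deriv (legendreP n) ((1 / 2) * (1 - 2 * t + 1 / (1 - 2 * t)))
        * ((1 / 2) * (-2 + -(-2) / (1 - 2 * t) ^ 2))) t := by
    have h := HasDerivAt.comp t hP hX
    exact h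
  have hD : HasDerivAt
      (fun s => (1 - 2 * s) ^ n * legendreP n ((1 / 2) * (1 - 2 * s + 1 / (1 - 2 * s))))
      ((n : ℝ) * (1 - 2 * t) ^ (n - 1) * (-2)
          * legendreP n ((1 / 2) * (1 - 2 * t + 1 / (1 - 2 * t)))
        + (1 - 2 * t) ^ n
          * (deriv (legendreP n) ((1 / 2) * (1 - 2 * t + 1 / (1 - 2 * t)))
              * ((1 / 2) * (-2 + -(-2) / (1 - 2 * t) ^ 2)))) t :=
    hpow.mul hcomp
  rw [hD.deriv, ← hx]
  -- final algebra
  rw [hxs, hsqrt]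
  have hr : (1 - 2 * t) ^ ((n : ℝ) - 1) = (1 - 2 * t) ^ n / (1 - 2 * t) := by
    rw [Real.rpow_sub hu0, Real.rpow_natCast, Real.rpow_one]
  have hn1 : (n : ℝ) * (1 - 2 * t) ^ (n - 1) = (n : ℝ) * (1 - 2 * t) ^ n / (1 - 2 * t) := by
    cases n with
    | zero => simp
    | succ m => rw [Nat.add_sub_cancel, pow_succ]; field_simp
  rw [hr, hn1]
  field_simp
  ring
end

section
/- For every natural number n ≥ 1 and every real x ≥ 1, the n-th Legendre polynomial satisfies P_n'(x)/P_n(x) ≤ 2n²/(x + (2n-1)√(x²-1)). -/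
open Polynomial

noncomputable def Rpoly (n : ℕ) : ℝ[X] := derivative^[n] ((X ^ 2 - 1) ^ n)
noncomputable def rv (n : ℕ) (x : ℝ) : ℝ := (Rpoly n).eval x
noncomputable def dv (n : ℕ) (x : ℝ) : ℝ := (derivative (Rpoly n)).eval x


lemma L1 (k : ℕ) (g : ℝ[X]) :
    derivative^[k + 1] (X * g) =
      X * derivative^[k + 1] g + (k + 1 : ℝ[X]) * derivative^[k] g := by
  induction k generalizing g with
  | zero => simp [derivative_mul, map_ofNat]; ring
  | succ k ih =>
    rw [Function.iterate_succ_apply' (n := k + 1) (x := X * g), ih,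
      Function.iterate_succ_apply' (n := k + 1) (x := g),
      Function.iterate_succ_apply' (n := k) (x := g)]
    simp [derivative_mul, map_ofNat]
    ring

lemma L2 (k : ℕ) (g : ℝ[X]) :
    derivative^[k + 2] ((X ^ 2 - 1) * g) =
      (X ^ 2 - 1) * derivative^[k + 2] g
        + (2 * (k + 2) : ℝ[X]) * (X * derivative^[k + 1] g)
        + ((k + 2) * (k + 1) : ℝ[X]) * derivative^[k] g := by
  induction k generalizing g with
  | zero =>
    show derivative (derivative ((X ^ 2 - 1) * g)) = _
    simp [derivative_mul, map_ofNat]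
    ring
  | succ k ih =>
    rw [Function.iterate_succ_apply' (n := k + 2) (x := (X ^ 2 - 1) * g), ih,
      Function.iterate_succ_apply' (n := k + 2) (x := g),
      Function.iterate_succ_apply' (n := k + 1) (x := g),
      Function.iterate_succ_apply' (n := k) (x := g)]
    push_cast
    simp [derivative_mul, map_ofNat]
    ring

lemma iter_comm (k : ℕ) (p : ℝ[X]) :
    derivative (derivative^[k] p) = derivative^[k] (derivative p) := by
  rw [← Function.iterate_succ_apply' (⇑derivative) k p, Function.iterate_succ_apply]

lemma deriv_pow_aux (n : ℕ) :
    derivative ((X ^ 2 - 1 : ℝ[X]) ^ (n + 1)) =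
      C (2 * ((n : ℝ) + 1)) * (X * (X ^ 2 - 1) ^ n) := by
  rw [derivative_pow]
  push_cast
  simp [map_ofNat]
  ring

lemma rec1 (n : ℕ) :
    derivative (Rpoly (n + 1)) =
      (2 * ((n : ℝ[X]) + 1)) * (X * derivative (Rpoly n)) + (2 * ((n : ℝ[X]) + 1) ^ 2) * Rpoly n := by
  rw [Rpoly, iter_comm, deriv_pow_aux, iterate_derivative_C_mul, L1]
  have h3 : derivative^[n + 1] ((X ^ 2 - 1 : ℝ[X]) ^ n) = derivative (Rpoly n) := by
    rw [Rpoly, Function.iterate_succ_apply']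
  rw [h3, Rpoly]
  push_cast
  simp [map_ofNat]
  ring

lemma rec2 (n : ℕ) :
    Rpoly (n + 1) =
      2 * ((X ^ 2 - 1) * derivative (Rpoly n)) + (2 * ((n : ℝ[X]) + 1)) * (X * Rpoly n) := by
  cases n with
  | zero => simp [Rpoly, map_ofNat]; norm_num
  | succ m =>
    have h1 : Rpoly (m + 2) =
        (X ^ 2 - 1) * derivative (Rpoly (m + 1))
          + (2 * ((m : ℝ[X]) + 2)) * (X * Rpoly (m + 1))
          + (((m : ℝ[X]) + 2) * ((m : ℝ[X]) + 1)) * derivative^[m] ((X ^ 2 - 1) ^ (m + 1)) := by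
      have e : ((X ^ 2 - 1 : ℝ[X]) ^ (m + 2)) = (X ^ 2 - 1) * (X ^ 2 - 1) ^ (m + 1) := by
        ring
      rw [Rpoly, e, L2]
      have h3 : derivative^[m + 2] ((X ^ 2 - 1 : ℝ[X]) ^ (m + 1)) = derivative (Rpoly (m + 1)) := by
        rw [Rpoly, Function.iterate_succ_apply']
      rw [h3, Rpoly]
      try push_cast
      try ring
    have h2 : Rpoly (m + 2) =
        (2 * ((m : ℝ[X]) + 2)) * (X * Rpoly (m + 1))
          + (2 * ((m : ℝ[X]) + 2) * ((m : ℝ[X]) + 1)) * derivative^[m] ((X ^ 2 - 1) ^ (m + 1)) := by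
      have h : Rpoly (m + 2) = derivative^[m + 1] (derivative ((X ^ 2 - 1) ^ (m + 2))) := by
        rw [Rpoly, Function.iterate_succ_apply]
      rw [h, deriv_pow_aux, iterate_derivative_C_mul, L1, Rpoly]
      push_cast
      simp [map_ofNat]
      ring
    push_cast
    linear_combination 2 * h1 - h2

lemma rec3 (n : ℕ) :
    (X ^ 2 - 1) * derivative (Rpoly (n + 1)) =
      ((n : ℝ[X]) + 1) * (X * Rpoly (n + 1)) - (2 * ((n : ℝ[X]) + 1) ^ 2) * Rpoly n := by
  linear_combination (X ^ 2 - 1 : ℝ[X]) * rec1 n - (((n : ℝ[X]) + 1) * X) * rec2 n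

lemma rec4 (n : ℕ) :
    Rpoly (n + 2) =
      (2 * (2 * (n : ℝ[X]) + 3)) * (X * Rpoly (n + 1)) - (4 * ((n : ℝ[X]) + 1) ^ 2) * Rpoly n := by
  have h := rec2 (n + 1)
  have h3 := rec3 n
  push_cast at h
  linear_combination h + 2 * h3

lemma rv_zero (x : ℝ) : rv 0 x = 1 := by simp [rv, Rpoly]
lemma rv_one (x : ℝ) : rv 1 x = 2 * x := by simp [rv, Rpoly]; norm_num
lemma dv_zero (x : ℝ) : dv 0 x = 0 := by simp [dv, Rpoly]

lemma erec1 (n : ℕ) (x : ℝ) :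
    dv (n + 1) x = 2 * ((n : ℝ) + 1) * (x * dv n x) + 2 * ((n : ℝ) + 1) ^ 2 * rv n x := by
  have h := congrArg (eval x) (rec1 n)
  simpa [rv, dv] using h
lemma erec3 (n : ℕ) (x : ℝ) :
    (x ^ 2 - 1) * dv (n + 1) x = ((n : ℝ) + 1) * (x * rv (n + 1) x) - 2 * ((n : ℝ) + 1) ^ 2 * rv n x := by
  have h := congrArg (eval x) (rec3 n)
  simpa [rv, dv] using h
lemma erec4 (n : ℕ) (x : ℝ) :
    rv (n + 2) x = 2 * (2 * (n : ℝ) + 3) * (x * rv (n + 1) x) - 4 * ((n : ℝ) + 1) ^ 2 * rv n x := by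
  have h := congrArg (eval x) (rec4 n)
  simpa [rv, dv] using h

lemma pos_grow (x : ℝ) (hx : 1 ≤ x) :
    ∀ n : ℕ, 0 < rv n x ∧ 2 * ((n : ℝ) + 1) * rv n x ≤ rv (n + 1) x := by
  intro n
  induction n with
  | zero =>
    constructor
    · rw [rv_zero]; norm_num
    · rw [rv_zero, rv_one]; push_cast; nlinarith
  | succ k ih =>
    obtain ⟨h0, h1⟩ := ih
    have hp : 0 < rv (k + 1) x := by nlinarith
    refine ⟨hp, ?_⟩
    have hr := erec4 k x
    push_cast
    nlinarith [mul_le_mul_of_nonneg_left h1 (by positivity : (0:ℝ) ≤ 2 * ((k:ℝ)+1)),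
      mul_le_mul_of_nonneg_left hp.le (by linarith : (0:ℝ) ≤ x - 1)]

lemma keyid (m x s : ℝ) (hs2 : s ^ 2 = x ^ 2 - 1) :
    m * (x + s) ^ 2 * (x + (2 * m - 1) * s) * (x + (2 * m - 3) * s)
      - (2 * m - 1) * x * (x + s) * (x + (2 * m - 3) * s) * (x + 2 * m * s)
      + (m - 1) * (x + 2 * (m - 1) * s) * (x + 2 * m * s)
      = s ^ 2 * (3 * m - 2) + 2 * (m - 1) * s ^ 4 + 2 * (m - 1) * x * s ^ 3 := by
  linear_combination ((m - 1) * x ^ 2 + (4 * m ^ 2 - 6 * m + 2) * x * s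
    + (4 * m ^ 3 - 8 * m ^ 2 + m + 2) * s ^ 2) * hs2

lemma ratio_ub (x s : ℝ) (hx : 1 ≤ x) (hs : 0 ≤ s) (hs2 : s ^ 2 = x ^ 2 - 1) :
    ∀ n : ℕ, rv (n + 1) x * (x + 2 * ((n : ℝ) + 1) * s)
      ≤ 2 * ((n : ℝ) + 1) * ((x + s) * ((x + (2 * (n : ℝ) + 1) * s) * rv n x)) := by
  intro n
  induction n with
  | zero =>
    rw [rv_zero, rv_one]
    push_cast
    nlinarith
  | succ k ih =>
    obtain ⟨hP0, hgrow⟩ := pos_grow x hx k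
    have hP1 : 0 < rv (k + 1) x := by nlinarith
    have hr := erec4 k x
    have hA : 0 ≤ x + 2 * ((k : ℝ) + 2) * s := by positivity
    have hD : 0 < (x + s) * (x + (2 * (k : ℝ) + 1) * s) := by positivity
    have t1 := mul_le_mul_of_nonneg_left ih
      (by positivity : (0:ℝ) ≤ 2 * ((k:ℝ)+1) * (x + 2 * ((k:ℝ)+2) * s))
    have hnn : (0:ℝ) ≤ s ^ 2 * (3 * ((k:ℝ)+2) - 2) + 2 * (((k:ℝ)+2) - 1) * s ^ 4
        + 2 * (((k:ℝ)+2) - 1) * x * s ^ 3 := by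
      have h3 : (0:ℝ) ≤ x * s ^ 3 := by positivity
      have h4 : (0:ℝ) ≤ s ^ 4 := by positivity
      have h2 : (0:ℝ) ≤ s ^ 2 := by positivity
      nlinarith
    have hkey2 := mul_nonneg hP1.le hnn
    rw [← keyid ((k : ℝ) + 2) x s hs2] at hkey2
    have G : rv (k + 2) x * (x + 2 * ((k : ℝ) + 2) * s) * ((x + s) * (x + (2 * (k : ℝ) + 1) * s))
        ≤ 2 * ((k : ℝ) + 2) * ((x + s) * ((x + (2 * (k : ℝ) + 3) * s) * rv (k + 1) x))
          * ((x + s) * (x + (2 * (k : ℝ) + 1) * s)) := by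
      rw [hr]
      nlinarith [t1, hkey2]
    push_cast
    nlinarith [G, hD]

lemma iterEval (p : ℝ[X]) (k : ℕ) :
    iteratedDeriv k (fun y => p.eval y) = fun y => (derivative^[k] p).eval y := by
  induction k with
  | zero => simp
  | succ k ih =>
    funext y
    rw [iteratedDeriv_succ, ih, Function.iterate_succ_apply' (⇑derivative) k p]
    exact Polynomial.deriv _

lemma legendreP_eq_s5 (n : ℕ) (x : ℝ) :
    legendreP n x = (1 / (2 ^ n * (n.factorial : ℝ))) * rv n x := by
  have hf : (fun y : ℝ => (y ^ 2 - 1) ^ n) = fun y => ((X ^ 2 - 1 : ℝ[X]) ^ n).eval y := by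
    funext y; simp
  rw [legendreP, hf, iterEval]
  rfl

lemma deriv_legendreP (n : ℕ) (x : ℝ) :
    deriv (legendreP n) x = (1 / (2 ^ n * (n.factorial : ℝ))) * dv n x := by
  have h : legendreP n = fun y => (1 / (2 ^ n * (n.factorial : ℝ))) * (Rpoly n).eval y := by
    funext y; exact legendreP_eq_s5 n y
  rw [h, deriv_const_mul_field]
  congr 1
  exact Polynomial.deriv _

lemma ratio_eq (n : ℕ) (x : ℝ) :
    deriv (legendreP n) x / legendreP n x = dv n x / rv n x := by
  rw [deriv_legendreP, legendreP_eq_s5]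
  have hc : (1 / (2 ^ n * (n.factorial : ℝ))) ≠ 0 := by positivity
  rw [mul_div_mul_left _ _ hc]

lemma rv_succ_one (n : ℕ) : rv (n + 1) 1 = 2 * ((n : ℝ) + 1) * rv n 1 := by
  have h := erec3 n 1
  have hn : ((n : ℝ) + 1) ≠ 0 := by positivity
  have h2 : ((n : ℝ) + 1) * rv (n + 1) 1 = ((n : ℝ) + 1) * (2 * ((n : ℝ) + 1) * rv n 1) := by
    nlinarith [h]
  exact mul_left_cancel₀ hn h2

lemma dv_val_one : ∀ n : ℕ, 2 * dv n 1 = (n : ℝ) * ((n : ℝ) + 1) * rv n 1 := by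
  intro n
  induction n with
  | zero => rw [dv_zero, rv_zero]; norm_num
  | succ k ih =>
    have h1 := erec1 k 1
    have h2 := rv_succ_one k
    push_cast
    nlinarith [h1, h2, ih]

theorem aux_main (n : ℕ) (hn : 1 ≤ n) (x : ℝ) (hx : 1 ≤ x) :
    dv n x / rv n x ≤
      2 * (n : ℝ) ^ 2 / (x + (2 * (n : ℝ) - 1) * Real.sqrt (x ^ 2 - 1)) := by
  obtain ⟨k, rfl⟩ : ∃ k, n = k + 1 := ⟨n - 1, (Nat.succ_pred_eq_of_pos hn).symm⟩
  have hn1 : (1 : ℝ) ≤ (k : ℝ) + 1 := by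
    have : (0:ℝ) ≤ (k:ℝ) := Nat.cast_nonneg k
    linarith
  obtain ⟨hPpos, -⟩ := pos_grow x hx (k + 1)
  rcases eq_or_lt_of_le hx with h1 | h1
  · -- x = 1
    subst h1
    have : Real.sqrt ((1:ℝ) ^ 2 - 1) = 0 := by norm_num
    rw [this]
    have hd := dv_val_one (k + 1)
    push_cast
    rw [div_le_div_iff₀ hPpos (by
      have : (0:ℝ) ≤ (k:ℝ) := Nat.cast_nonneg k
      nlinarith : (0:ℝ) < 1 + (2 * ((k:ℝ)+1) - 1) * 0)]
    push_cast at hd hPpos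
    have hk0 : (0:ℝ) ≤ (k:ℝ) := Nat.cast_nonneg k
    nlinarith [hd, hPpos.le, mul_nonneg (mul_nonneg hk0 hk0) hPpos.le, mul_nonneg hk0 hPpos.le]
  · -- x > 1
    set s := Real.sqrt (x ^ 2 - 1) with hsdef
    have hs2 : s ^ 2 = x ^ 2 - 1 := Real.sq_sqrt (by nlinarith)
    have hs0 : 0 ≤ s := Real.sqrt_nonneg _
    have hspos : 0 < s := Real.sqrt_pos.mpr (by nlinarith)
    have hden : 0 < x + (2 * ((k:ℕ)+1 : ℝ) - 1) * s := by
      have : (0:ℝ) < x := by linarith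
      have h2 : (0:ℝ) ≤ (2 * ((k:ℕ)+1 : ℝ) - 1) * s := by
        apply mul_nonneg _ hs0
        push_cast
        linarith
      linarith
    push_cast
    push_cast at hden
    rw [div_le_div_iff₀ hPpos hden]
    -- multiply by W := (x^2-1)*(x+s) > 0
    have hW : 0 < (x ^ 2 - 1) * (x + s) := by nlinarith
    have e3' : dv (k + 1) x * ((x + (2 * (k:ℝ) + 1) * s) * (x + s)) * (x ^ 2 - 1)
        = (((k:ℝ) + 1) * (x * rv (k + 1) x) - 2 * ((k:ℝ) + 1) ^ 2 * rv k x)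
          * ((x + (2 * (k:ℝ) + 1) * s) * (x + s)) := by
      linear_combination ((x + (2 * (k:ℝ) + 1) * s) * (x + s)) * erec3 k x
    have t'' := mul_le_mul_of_nonneg_left (ratio_ub x s hx hs0 hs2 k)
      (by positivity : (0:ℝ) ≤ (k:ℝ) + 1)
    have eq2 : ((k:ℝ) + 1) * rv (k + 1) x * (x * ((x + (2 * (k:ℝ) + 1) * s) * (x + s)) - (x + 2 * ((k:ℝ) + 1) * s))
        = ((k:ℝ) + 1) * rv (k + 1) x * (2 * ((k:ℝ) + 1) * (s ^ 2 * (x + s))) := by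
      have eqq : x * ((x + (2 * (k:ℝ) + 1) * s) * (x + s)) - (x + 2 * ((k:ℝ) + 1) * s)
          = 2 * ((k:ℝ) + 1) * (s ^ 2 * (x + s)) := by
        linear_combination (-(x + 2 * ((k:ℝ) + 1) * s)) * hs2
      rw [eqq]
    have H : dv (k + 1) x * (x + (2 * ((k:ℕ)+1 : ℝ) - 1) * s) * ((x ^ 2 - 1) * (x + s))
        ≤ 2 * (((k:ℕ)+1 : ℝ)) ^ 2 * rv (k + 1) x * ((x ^ 2 - 1) * (x + s)) := by
      have hWs : 2 * ((k:ℝ)+1) ^ 2 * rv (k + 1) x * ((x ^ 2 - 1) * (x + s))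
          = 2 * ((k:ℝ)+1) ^ 2 * rv (k + 1) x * (s ^ 2 * (x + s)) := by rw [← hs2]
      push_cast
      nlinarith [e3', t'', eq2, hWs]
    push_cast
    push_cast at H
    nlinarith [H, hW]

theorem legendre_ratio_upper_bound (n : ℕ) (hn : 1 ≤ n) (x : ℝ) (hx : 1 ≤ x) :
    deriv (legendreP n) x / legendreP n x ≤
      2 * (n : ℝ) ^ 2 / (x + (2 * (n : ℝ) - 1) * Real.sqrt (x ^ 2 - 1)) := by
  rw [ratio_eq]
  exact aux_main n hn x hx
end

section
/- Let n ∈ ℕ, n ≥ 1, and λ > -1/2. Then for every real x ≥ 1, u_n(x) = (P_n^{(λ)})'(x)/P_n^{(λ)}(x) ≥ n(n+2λ)/((2λ+1)x + (n-1)√(x²-1)). -/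
set_option maxHeartbeats 1000000


/-- Chebyshev polynomials of the first kind (as real functions):
`T_0 = 1`, `T_1 = x`, `T_{n+2}(x) = 2x T_{n+1}(x) - T_n(x)`. -/
noncomputable def chebT : ℕ → ℝ → ℝ
  | 0 => fun _ => 1
  | 1 => fun x => x
  | n + 2 => fun x => 2 * x * chebT (n + 1) x - chebT n x

/-- The ultraspherical (Gegenbauer) polynomials for `lam ≠ 0`, via
`P_0 = 1`, `P_1 = 2λx`, `(n+1)P_{n+1}(x) = 2(n+λ)x P_n(x) - (n+2λ-1)P_{n-1}(x)`. -/
noncomputable def gegenRec (lam : ℝ) : ℕ → ℝ → ℝ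
  | 0 => fun _ => 1
  | 1 => fun x => 2 * lam * x
  | n + 2 => fun x =>
      (2 * ((n : ℝ) + 1 + lam) * x * gegenRec lam (n + 1) x -
        ((n : ℝ) + 2 * lam) * gegenRec lam n x) / ((n : ℝ) + 2)

/-- The `n`-th ultraspherical polynomial `P_n^{(λ)}`; for `λ = 0` it is taken to be the
Chebyshev polynomial of the first kind `T_n`. -/
noncomputable def ultra (lam : ℝ) (n : ℕ) : ℝ → ℝ :=
  if lam = 0 then chebT n else gegenRec lam n

/-- The ratio `u_n(x) = (P_n^{(λ)})'(x) / P_n^{(λ)}(x)`. -/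
noncomputable def uRatio (lam : ℝ) (n : ℕ) (x : ℝ) : ℝ :=
  deriv (ultra lam n) x / ultra lam n x

noncomputable def chebT' : ℕ → ℝ → ℝ
  | 0 => fun _ => 0
  | 1 => fun _ => 1
  | n + 2 => fun x => 2 * chebT (n + 1) x + 2 * x * chebT' (n + 1) x - chebT' n x

noncomputable def gegen' (lam : ℝ) : ℕ → ℝ → ℝ
  | 0 => fun _ => 0
  | 1 => fun _ => 2 * lam
  | n + 2 => fun x =>
      (2 * ((n : ℝ) + 1 + lam) * (gegenRec lam (n + 1) x + x * gegen' lam (n + 1) x) -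
        ((n : ℝ) + 2 * lam) * gegen' lam n x) / ((n : ℝ) + 2)

lemma chebT_ss (n : ℕ) (x : ℝ) : chebT (n+2) x = 2 * x * chebT (n+1) x - chebT n x := rfl
lemma chebT'_ss (n : ℕ) (x : ℝ) :
    chebT' (n+2) x = 2 * chebT (n+1) x + 2 * x * chebT' (n+1) x - chebT' n x := rfl
lemma gegenRec_ss (lam : ℝ) (n : ℕ) (x : ℝ) : gegenRec lam (n+2) x =
    (2 * ((n : ℝ) + 1 + lam) * x * gegenRec lam (n + 1) x -
      ((n : ℝ) + 2 * lam) * gegenRec lam n x) / ((n : ℝ) + 2) := rfl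
lemma gegen'_ss (lam : ℝ) (n : ℕ) (x : ℝ) : gegen' lam (n+2) x =
    (2 * ((n : ℝ) + 1 + lam) * (gegenRec lam (n + 1) x + x * gegen' lam (n + 1) x) -
      ((n : ℝ) + 2 * lam) * gegen' lam n x) / ((n : ℝ) + 2) := rfl

lemma chebT_hasDerivAt : ∀ n x, HasDerivAt (chebT n) (chebT' n x) x := by
  have key : ∀ n, (∀ x, HasDerivAt (chebT n) (chebT' n x) x) ∧
      (∀ x, HasDerivAt (chebT (n+1)) (chebT' (n+1) x) x) := by
    intro n
    induction n with
    | zero =>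
      constructor
      · intro x; simpa [chebT, chebT'] using (hasDerivAt_const x (1:ℝ))
      · intro x; simpa [chebT, chebT'] using (hasDerivAt_id' x)
    | succ k ih =>
      refine ⟨ih.2, fun x => ?_⟩
      have h := (((hasDerivAt_id' x).const_mul (2:ℝ)).mul (ih.2 x)).sub (ih.1 x)
      have e : chebT (k+2) = fun y => 2 * y * chebT (k+1) y - chebT k y :=
        funext fun y => chebT_ss k y
      rw [e, chebT'_ss]
      exact h.congr_deriv (by ring)
  exact fun n => (key n).1

lemma gegen_hasDerivAt (lam : ℝ) : ∀ n x, HasDerivAt (gegenRec lam n) (gegen' lam n x) x := by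
  have key : ∀ n, (∀ x, HasDerivAt (gegenRec lam n) (gegen' lam n x) x) ∧
      (∀ x, HasDerivAt (gegenRec lam (n+1)) (gegen' lam (n+1) x) x) := by
    intro n
    induction n with
    | zero =>
      constructor
      · intro x; simpa [gegenRec, gegen'] using (hasDerivAt_const x (1:ℝ))
      · intro x
        have h := (hasDerivAt_id x).const_mul (2*lam)
        have e : gegenRec lam 1 = fun y => 2 * lam * y := rfl
        rw [show gegen' lam 1 x = 2*lam from rfl, e]
        simpa using h
    | succ k ih =>
      refine ⟨ih.2, fun x => ?_⟩
      have h := (((((hasDerivAt_id' x).const_mul (2*((k:ℝ)+1+lam))).mul (ih.2 x)).sub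
        ((ih.1 x).const_mul ((k:ℝ)+2*lam))).div_const ((k:ℝ)+2))
      have e : gegenRec lam (k+2) = fun y =>
          (2 * ((k : ℝ) + 1 + lam) * y * gegenRec lam (k + 1) y -
            ((k : ℝ) + 2 * lam) * gegenRec lam k y) / ((k : ℝ) + 2) :=
        funext fun y => gegenRec_ss lam k y
      rw [e, gegen'_ss]
      exact h.congr_deriv (by ring)
  exact fun n => (key n).1

lemma chebT_cont : ∀ n, Continuous (chebT n) ∧ Continuous (chebT' n) := by
  have key : ∀ n, (Continuous (chebT n) ∧ Continuous (chebT' n)) ∧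
      (Continuous (chebT (n+1)) ∧ Continuous (chebT' (n+1))) := by
    intro n
    induction n with
    | zero =>
      refine ⟨⟨?_, ?_⟩, ⟨?_, ?_⟩⟩ <;> simp [chebT, chebT'] <;> fun_prop
    | succ k ih =>
      refine ⟨ih.2, ?_, ?_⟩
      · have e : chebT (k+2) = fun y => 2 * y * chebT (k+1) y - chebT k y :=
          funext fun y => chebT_ss k y
        rw [e]; exact ((continuous_const.mul continuous_id).mul ih.2.1).sub ih.1.1
      · have e : chebT' (k+2) = fun y => 2 * chebT (k+1) y + 2 * y * chebT' (k+1) y - chebT' k y :=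
          funext fun y => chebT'_ss k y
        rw [e]
        exact ((continuous_const.mul ih.2.1).add
          ((continuous_const.mul continuous_id).mul ih.2.2)).sub ih.1.2
  exact fun n => (key n).1

lemma gegen_cont (lam : ℝ) : ∀ n, Continuous (gegenRec lam n) ∧ Continuous (gegen' lam n) := by
  have key : ∀ n, (Continuous (gegenRec lam n) ∧ Continuous (gegen' lam n)) ∧
      (Continuous (gegenRec lam (n+1)) ∧ Continuous (gegen' lam (n+1))) := by
    intro n
    induction n with
    | zero =>
      refine ⟨⟨?_, ?_⟩, ⟨?_, ?_⟩⟩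
      · simpa [gegenRec] using continuous_const
      · simpa [gegen'] using continuous_const
      · exact (continuous_const.mul continuous_id)
      · simpa [gegen'] using continuous_const
    | succ k ih =>
      refine ⟨ih.2, ?_, ?_⟩
      · have e : gegenRec lam (k+2) = fun y =>
            (2 * ((k : ℝ) + 1 + lam) * y * gegenRec lam (k + 1) y -
              ((k : ℝ) + 2 * lam) * gegenRec lam k y) / ((k : ℝ) + 2) :=
          funext fun y => gegenRec_ss lam k y
        rw [e]
        exact (((continuous_const.mul continuous_id).mul ih.2.1).sub
          (continuous_const.mul ih.1.1)).div_const _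
      · have e : gegen' lam (k+2) = fun y =>
            (2 * ((k : ℝ) + 1 + lam) * (gegenRec lam (k + 1) y + y * gegen' lam (k + 1) y) -
              ((k : ℝ) + 2 * lam) * gegen' lam k y) / ((k : ℝ) + 2) :=
          funext fun y => gegen'_ss lam k y
        rw [e]
        exact ((continuous_const.mul (ih.2.1.add (continuous_id.mul ih.2.2))).sub
          (continuous_const.mul ih.1.2)).div_const _
  exact fun n => (key n).1

lemma chebT_one : ∀ n, chebT n 1 = 1 := by
  have key : ∀ n, chebT n 1 = 1 ∧ chebT (n+1) 1 = 1 := by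
    intro n
    induction n with
    | zero => constructor <;> simp [chebT]
    | succ k ih =>
      refine ⟨ih.2, ?_⟩
      rw [chebT_ss, ih.1, ih.2]; ring
  exact fun n => (key n).1

lemma gegen_one (lam : ℝ) : ∀ n, gegenRec lam (n+1) 1 = (((n:ℝ) + 2*lam)/((n:ℝ)+1)) * gegenRec lam n 1 := by
  intro n
  induction n with
  | zero => simp [gegenRec]
  | succ k ih =>
    rw [gegenRec_ss, ih]
    have h1 : ((k:ℝ)+1) ≠ 0 := by positivity
    have h2 : ((k:ℝ)+2) ≠ 0 := by positivity
    push_cast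
    field_simp
    ring

lemma gegen_one_ne (lam : ℝ) (hl : -(1/2) < lam) (hl0 : lam ≠ 0) : ∀ n, gegenRec lam n 1 ≠ 0 := by
  intro n
  induction n with
  | zero => simp [gegenRec]
  | succ k ih =>
    rw [gegen_one lam k]
    have hk : ((k:ℝ) + 2*lam) ≠ 0 := by
      rcases Nat.eq_zero_or_pos k with h | h
      · subst h; simpa using hl0
      · have : (1:ℝ) ≤ (k:ℝ) := by exact_mod_cast h
        nlinarith
    have : ((k:ℝ)+1) ≠ 0 := by positivity
    exact mul_ne_zero (div_ne_zero hk this) ih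

lemma cheb_identity : ∀ (n : ℕ) (x : ℝ), x^2 ≠ 1 →
    (x^2-1) * chebT' (n+1) x = ((n:ℝ)+1) * (x * chebT (n+1) x - chebT n x) := by
  have key : ∀ n, (∀ x : ℝ, x^2 ≠ 1 →
      (x^2-1) * chebT' (n+1) x = ((n:ℝ)+1) * (x * chebT (n+1) x - chebT n x)) ∧
      (∀ x : ℝ, x^2 ≠ 1 →
      (x^2-1) * chebT' (n+2) x = ((n:ℝ)+2) * (x * chebT (n+2) x - chebT (n+1) x)) := by
    intro n
    induction n with
    | zero =>
      constructor
      · intro x _; simp [chebT, chebT']; ring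
      · intro x _
        rw [chebT'_ss, chebT_ss]
        simp [chebT, chebT']
        ring
    | succ k ih =>
      constructor
      · intro x hx
        have h := ih.2 x hx
        push_cast
        push_cast at h
        simp only [show k+1+1 = k+2 from rfl, show k+1+2 = k+3 from rfl] at h ⊢
        linear_combination h
      · intro x hx
        have ih1 := ih.1 x hx
        have ih2 := ih.2 x hx
        have hq : chebT (k+2) x = 2 * x * chebT (k+1) x - chebT k x := chebT_ss k x
        push_cast
        simp only [show k+1+1 = k+2 from rfl, show k+1+2 = k+3 from rfl,
          show k+2+1 = k+3 from rfl] at ih1 ih2 ⊢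
        rw [chebT'_ss (k+1), chebT_ss (k+1)]
        simp only [show k+1+1 = k+2 from rfl] at *
        push_cast at *
        linear_combination (2*x) * ih2 - ih1 + ((k:ℝ)+1) * hq
  exact fun n => (key n).1

lemma gegen_identity (lam : ℝ) : ∀ (n : ℕ) (x : ℝ), x^2 ≠ 1 →
    (x^2-1) * gegen' lam (n+1) x =
      ((n:ℝ)+1) * x * gegenRec lam (n+1) x - ((n:ℝ)+2*lam) * gegenRec lam n x := by
  have key : ∀ n, (∀ x : ℝ, x^2 ≠ 1 →
      (x^2-1) * gegen' lam (n+1) x =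
        ((n:ℝ)+1) * x * gegenRec lam (n+1) x - ((n:ℝ)+2*lam) * gegenRec lam n x) ∧
      (∀ x : ℝ, x^2 ≠ 1 →
      (x^2-1) * gegen' lam (n+2) x =
        ((n:ℝ)+2) * x * gegenRec lam (n+2) x - ((n:ℝ)+1+2*lam) * gegenRec lam (n+1) x) := by
    intro n
    induction n with
    | zero =>
      constructor
      · intro x _; simp [gegenRec, gegen']; ring
      · intro x _
        rw [gegen'_ss, gegenRec_ss]
        simp [gegenRec, gegen']
        ring
    | succ k ih =>
      constructor
      · intro x hx
        have h := ih.2 x hx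
        push_cast
        push_cast at h
        simp only [show k+1+1 = k+2 from rfl, show k+1+2 = k+3 from rfl] at h ⊢
        linear_combination h
      · intro x hx
        have ih1 := ih.1 x hx
        have ih2 := ih.2 x hx
        have h3 : ((k:ℝ)+3) ≠ 0 := by positivity
        have hg : ((k:ℝ)+3) * gegen' lam (k+3) x =
            2 * ((k:ℝ)+2+lam) * (gegenRec lam (k+2) x + x * gegen' lam (k+2) x) -
              ((k:ℝ)+1+2*lam) * gegen' lam (k+1) x := by
          have e := gegen'_ss lam (k+1) x
          simp only [show k+1+1 = k+2 from rfl, show k+1+2 = k+3 from rfl] at e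
          rw [e]
          push_cast
          field_simp
          try ring
        have hp : ((k:ℝ)+3) * gegenRec lam (k+3) x =
            2 * ((k:ℝ)+2+lam) * x * gegenRec lam (k+2) x -
              ((k:ℝ)+1+2*lam) * gegenRec lam (k+1) x := by
          have e := gegenRec_ss lam (k+1) x
          simp only [show k+1+1 = k+2 from rfl, show k+1+2 = k+3 from rfl] at e
          rw [e]
          push_cast
          field_simp
          try ring
        have hq : ((k:ℝ)+2) * gegenRec lam (k+2) x =
            2 * ((k:ℝ)+1+lam) * x * gegenRec lam (k+1) x -
              ((k:ℝ)+2*lam) * gegenRec lam k x := by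
          rw [gegenRec_ss lam k x]
          field_simp
          try ring
        push_cast
        simp only [show k+1+1 = k+2 from rfl, show k+1+2 = k+3 from rfl,
          show k+2+1 = k+3 from rfl] at ih1 ih2 ⊢
        push_cast at ih1 ih2
        apply mul_left_cancel₀ h3
        linear_combination (x^2-1) * hg + (2*((k:ℝ)+2+lam)*x) * ih2 - ((k:ℝ)+1+2*lam) * ih1 -
          (((k:ℝ)+3)*x) * hp + ((k:ℝ)+1+2*lam) * hq
  exact fun n => (key n).1

noncomputable def rhoP (lam x s m : ℝ) : ℝ :=
  m * ((2*lam+1)*x + (m+2*lam)*s) / ((m+2*lam-1) * (x+s) * ((2*lam+1)*x + (m-1)*s))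

noncomputable def rhoT (x s m : ℝ) : ℝ := (x + m*s) / ((x+s) * (x + (m-1)*s))

section Algebra

variable {lam x s m : ℝ} (hl : -(1/2) < lam) (hx : 1 < x) (hs : s^2 = x^2-1) (hs0 : 0 < s)

include hl hx hs hs0

lemma gegen_E_pos (hm : 2 ≤ m) : 0 < 2*(m+lam)*x - (m+2*lam-1) * rhoP lam x s m := by
  have hx0 : (0:ℝ) < x := by linarith
  have hxs : (0:ℝ) < x + s := by linarith
  have hc : (0:ℝ) < m + 2*lam - 1 := by linarith
  have hD0 : (0:ℝ) < (2*lam+1)*x + (m-1)*s := by nlinarith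
  have hden0 : (0:ℝ) < (m+2*lam-1) * (x+s) * ((2*lam+1)*x + (m-1)*s) :=
    mul_pos (mul_pos hc hxs) hD0
  rw [rhoP]
  have hsplit : 2*(m+lam)*x - (m+2*lam-1) *
      (m * ((2*lam+1)*x + (m+2*lam)*s) / ((m+2*lam-1) * (x+s) * ((2*lam+1)*x + (m-1)*s))) =
      (2*(m+lam)*x*((x+s)*((2*lam+1)*x+(m-1)*s)) - m*((2*lam+1)*x + (m+2*lam)*s)) /
        ((x+s)*((2*lam+1)*x+(m-1)*s)) := by
    rw [mul_assoc (m+2*lam-1), mul_div_assoc', mul_div_mul_left _ _ hc.ne', sub_div' (mul_pos hxs hD0).ne']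
  rw [hsplit]
  apply div_pos _ (mul_pos hxs hD0)
  have hid : 2*(m+lam)*x*((x+s)*((2*lam+1)*x+(m-1)*s)) - m*((2*lam+1)*x + (m+2*lam)*s) =
      (m+2*lam) * (2*(m+lam)*x^2*(x+s) + x - 2*m*x - m*s) := by
    linear_combination ((-2)*lam*x + (-2)*m*x + 2*m*lam*x + 2*m^2*x) * hs
  rw [hid]
  have h1 : (0:ℝ) < m + 2*lam := by linarith
  apply mul_pos h1
  have hml : (0:ℝ) < m + lam := by linarith
  have hx21 : (0:ℝ) ≤ x^2 - 1 := by nlinarith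
  have ha : (0:ℝ) ≤ (m+lam)*((x^2-1)*x) := by positivity
  have hb : (0:ℝ) ≤ (m+lam)*((x^2-1)*s) := by positivity
  have hc' : (0:ℝ) < x*(2*lam+1) := by nlinarith
  have hd' : (0:ℝ) < s*(m+2*lam) := by nlinarith
  nlinarith [ha, hb, hc', hd']

lemma gegen_step (hm : 2 ≤ m) :
    m+1 ≤ rhoP lam x s (m+1) * (2*(m+lam)*x - (m+2*lam-1) * rhoP lam x s m) := by
  have hx0 : (0:ℝ) < x := by linarith
  have hxs : (0:ℝ) < x + s := by linarith
  have hc : (0:ℝ) < m + 2*lam - 1 := by linarith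
  have hD0 : (0:ℝ) < (2*lam+1)*x + (m-1)*s := by nlinarith
  have hc1 : (0:ℝ) < (m+1) + 2*lam - 1 := by linarith
  have hD1 : (0:ℝ) < (2*lam+1)*x + ((m+1)-1)*s := by nlinarith
  have hden1 : (0:ℝ) < ((m+1)+2*lam-1) * (x+s) * ((2*lam+1)*x + ((m+1)-1)*s) :=
    mul_pos (mul_pos hc1 hxs) hD1
  rw [rhoP, rhoP]
  have hsplit : 2*(m+lam)*x - (m+2*lam-1) *
      (m * ((2*lam+1)*x + (m+2*lam)*s) / ((m+2*lam-1) * (x+s) * ((2*lam+1)*x + (m-1)*s))) =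
      (2*(m+lam)*x*((x+s)*((2*lam+1)*x+(m-1)*s)) - m*((2*lam+1)*x + (m+2*lam)*s)) /
        ((x+s)*((2*lam+1)*x+(m-1)*s)) := by
    rw [mul_assoc (m+2*lam-1), mul_div_assoc', mul_div_mul_left _ _ hc.ne', sub_div' (mul_pos hxs hD0).ne']
  rw [hsplit, div_mul_div_comm, le_div_iff₀ (mul_pos hden1 (mul_pos hxs hD0))]
  have hid : ((m+1) * ((2*lam+1)*x + ((m+1)+2*lam)*s)) *
      (2*(m+lam)*x*((x+s)*((2*lam+1)*x+(m-1)*s)) - m*((2*lam+1)*x + (m+2*lam)*s)) -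
      (m+1) * (((m+1)+2*lam-1) * (x+s) * ((2*lam+1)*x + ((m+1)-1)*s) *
        ((x+s)*((2*lam+1)*x+(m-1)*s))) =
      ((m+1)*(2*m*(m+2*lam)*(1+lam))) * (s^3*(x+s)) := by
    linear_combination ((-1)*m*x*s + (-1)*m*x^2 + (-2)*m*lam*s^2 + (-6)*m*lam*x*s +
      (-4)*m*lam*x^2 + (-4)*m*lam^2*s^2 + (-8)*m*lam^2*x*s + (-4)*m*lam^2*x^2 +
      (-1)*m^2*s^2 + (-3)*m^2*x*s + (-1)*m^2*x^2 + (-6)*m^2*lam*s^2 + (-10)*m^2*lam*x*s +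
      (-4)*m^2*lam*x^2 + (-4)*m^2*lam^2*s^2 + (-8)*m^2*lam^2*x*s + (-4)*m^2*lam^2*x^2 +
      (-2)*m^3*s^2 + (-2)*m^3*x*s + (-4)*m^3*lam*s^2 + (-4)*m^3*lam*x*s + (-1)*m^4*s^2) * hs
  have hpos : (0:ℝ) ≤ ((m+1)*(2*m*(m+2*lam)*(1+lam))) * (s^3*(x+s)) := by
    have h1 : (0:ℝ) < (m+1)*(2*m*(m+2*lam)*(1+lam)) := by
      have e1 : (0:ℝ) < m+1 := by linarith
      have e2 : (0:ℝ) < 2*m := by linarith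
      have e3 : (0:ℝ) < m+2*lam := by linarith
      have e4 : (0:ℝ) < 1+lam := by linarith
      exact mul_pos e1 (mul_pos (mul_pos e2 e3) e4)
    have h2 : (0:ℝ) < s^3*(x+s) := mul_pos (by positivity) hxs
    positivity
  linarith

lemma gegen_final_id (hm : 2 ≤ m) :
    (m*x - (m+2*lam-1) * rhoP lam x s m) * ((2*lam+1)*x + (m-1)*s) = m*(m+2*lam)*s^2 := by
  have hxs : (0:ℝ) < x + s := by linarith
  have hc : (0:ℝ) < m + 2*lam - 1 := by linarith
  have hD0 : (0:ℝ) < (2*lam+1)*x + (m-1)*s := by nlinarith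
  have hden0 : ((m+2*lam-1) * (x+s) * ((2*lam+1)*x + (m-1)*s)) ≠ 0 := by positivity
  have hrh : rhoP lam x s m * ((m+2*lam-1) * (x+s) * ((2*lam+1)*x + (m-1)*s)) =
      m * ((2*lam+1)*x + (m+2*lam)*s) := div_mul_cancel₀ _ hden0
  apply mul_right_cancel₀ (show (m+2*lam-1)*(x+s) ≠ 0 by positivity)
  linear_combination (-(m+2*lam-1))*hrh +
    ((m+2*lam-1)*m*(-(x + 2*lam*s + 2*lam*x + m*s))) * hs

lemma cheb_E_pos (hm : 1 ≤ m) : 0 < 2*x - rhoT x s m := by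
  have hx0 : (0:ℝ) < x := by linarith
  have hxs : (0:ℝ) < x + s := by linarith
  have hD0 : (0:ℝ) < x + (m-1)*s := by nlinarith
  rw [rhoT, sub_pos, div_lt_iff₀ (mul_pos hxs hD0)]
  have h1 : (0:ℝ) ≤ (m-1)*(x*s^2) := mul_nonneg (by linarith) (by positivity)
  have h2 : (0:ℝ) < (m*s)*(2*x^2-1) := mul_pos (by positivity) (by nlinarith)
  have h3 : (0:ℝ) < x*(2*x^2-1) := mul_pos hx0 (by nlinarith)
  nlinarith [h1, h2, h3]

lemma cheb_step (hm : 1 ≤ m) : 1 ≤ rhoT x s (m+1) * (2*x - rhoT x s m) := by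
  have hx0 : (0:ℝ) < x := by linarith
  have hxs : (0:ℝ) < x + s := by linarith
  have hD0 : (0:ℝ) < x + (m-1)*s := by nlinarith
  have hD1 : (0:ℝ) < x + ((m+1)-1)*s := by nlinarith
  rw [rhoT, rhoT]
  have hsplit : 2*x - (x + m*s)/((x+s)*(x+(m-1)*s)) =
      (2*x*((x+s)*(x+(m-1)*s)) - (x + m*s))/((x+s)*(x+(m-1)*s)) := by
    rw [sub_div' (mul_pos hxs hD0).ne']
  rw [hsplit, div_mul_div_comm, le_div_iff₀ (mul_pos (mul_pos hxs hD1) (mul_pos hxs hD0))]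
  have hid : (x + (m+1)*s) * (2*x*((x+s)*(x+(m-1)*s)) - (x + m*s)) -
      1 * ((x+s)*(x+((m+1)-1)*s) * ((x+s)*(x+(m-1)*s))) = (2*m) * (s^3*(x+s)) := by
    linear_combination ((-1)*x*s + (-1)*x^2 + (-1)*m*s^2 + (-2)*m*x*s + (-1)*m^2*s^2) * hs
  have hpos : (0:ℝ) ≤ (2*m) * (s^3*(x+s)) := by positivity
  linarith

lemma cheb_final_id (hm : 1 ≤ m) :
    (x - rhoT x s m) * (x + (m-1)*s) = m*s^2 := by
  have hxs : (0:ℝ) < x + s := by linarith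
  have hD0 : (0:ℝ) < x + (m-1)*s := by nlinarith
  have hden0 : ((x+s)*(x+(m-1)*s)) ≠ 0 := by positivity
  have hrh : rhoT x s m * ((x+s)*(x+(m-1)*s)) = x + m*s := div_mul_cancel₀ _ hden0
  apply mul_right_cancel₀ (show (x+s) ≠ 0 by positivity)
  linear_combination (-1)*hrh + (-(x+m*s)) * hs

lemma rhoP_pos (hm : 2 ≤ m) : 0 < rhoP lam x s m := by
  have hx0 : (0:ℝ) < x := by linarith
  have hxs : (0:ℝ) < x + s := by linarith
  have hc : (0:ℝ) < m + 2*lam - 1 := by linarith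
  have hD0 : (0:ℝ) < (2*lam+1)*x + (m-1)*s := by nlinarith
  apply div_pos _ (mul_pos (mul_pos hc hxs) hD0)
  have h1 : (0:ℝ) < (2*lam+1)*x := by nlinarith
  have h2 : (0:ℝ) < (m+2*lam)*s := by nlinarith
  nlinarith

lemma rhoT_pos (hm : 1 ≤ m) : 0 < rhoT x s m := by
  have hx0 : (0:ℝ) < x := by linarith
  have hxs : (0:ℝ) < x + s := by linarith
  have hD0 : (0:ℝ) < x + (m-1)*s := by nlinarith
  exact div_pos (by nlinarith) (mul_pos hxs hD0)

end Algebra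

section Invariant

variable {lam x s : ℝ} (hl : -(1/2) < lam) (hx : 1 < x) (hs : s^2 = x^2-1) (hs0 : 0 < s)

include hl hx hs hs0

lemma gegen_inv (hl0 : lam ≠ 0) : ∀ k : ℕ,
    0 < gegenRec lam (k+1) x * gegenRec lam (k+2) x ∧
    gegenRec lam (k+1) x * gegenRec lam (k+2) x ≤
      rhoP lam x s ((k:ℝ)+2) * (gegenRec lam (k+2) x)^2 := by
  have hx0 : (0:ℝ) < x := by linarith
  have hxs : (0:ℝ) < x + s := by linarith
  have hl2 : (0:ℝ) < lam^2 := lt_of_le_of_ne (sq_nonneg lam) (Ne.symm (pow_ne_zero 2 hl0))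
  intro k
  induction k with
  | zero =>
    have hP1 : gegenRec lam 1 x = 2*lam*x := rfl
    have hP2 : gegenRec lam 2 x = lam*(2*(1+lam)*x^2-1) := by
      rw [gegenRec_ss]
      simp [gegenRec]
      ring
    have hQ : (0:ℝ) < 2*(1+lam)*x^2-1 := by nlinarith
    constructor
    · rw [hP1, hP2]
      nlinarith [mul_pos (mul_pos hl2 hx0) hQ]
    · rw [hP1, hP2]
      push_cast
      rw [show ((0:ℝ)+2) = 2 from by norm_num, rhoP]
      have hD : (0:ℝ) < (2*lam+1)*x + (2-1)*s := by nlinarith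
      have hden : (0:ℝ) < (2+2*lam-1)*(x+s)*((2*lam+1)*x+(2-1)*s) :=
        mul_pos (mul_pos (by linarith) hxs) hD
      rw [div_mul_eq_mul_div, le_div_iff₀ hden]
      have hid : (2*((2*lam+1)*x + (2+2*lam)*s)) * (lam*(2*(1+lam)*x^2-1))^2 -
          (2*lam*x*(lam*(2*(1+lam)*x^2-1))) * ((2+2*lam-1)*(x+s)*((2*lam+1)*x+(2-1)*s)) =
          (lam^2*(2*(1+lam)*x^2-1))*(4*(1+lam)*s^3) := by
        linear_combination (4*lam^2*s + 2*lam^2*x + (-8)*lam^2*x^2*s + (-4)*lam^2*x^3 +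
          4*lam^3*s + 4*lam^3*x + (-16)*lam^3*x^2*s + (-12)*lam^3*x^3 +
          (-8)*lam^4*x^2*s + (-8)*lam^4*x^3) * hs
      have hq2 : (0:ℝ) ≤ 4*(1+lam)*s^3 := by nlinarith [pow_pos hs0 3]
      have hpos : (0:ℝ) ≤ (lam^2*(2*(1+lam)*x^2-1))*(4*(1+lam)*s^3) :=
        mul_nonneg (mul_pos hl2 hQ).le hq2
      linarith
  | succ k ih =>
    obtain ⟨hprod, hle⟩ := ih
    have hm : (2:ℝ) ≤ (k:ℝ)+2 := by linarith [Nat.cast_nonneg (α := ℝ) k]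
    have hP2ne : gegenRec lam (k+2) x ≠ 0 := right_ne_zero_of_mul (ne_of_gt hprod)
    have hPP : 0 < gegenRec lam (k+2) x * gegenRec lam (k+2) x := mul_self_pos.mpr hP2ne
    set P1 := gegenRec lam (k+1) x with hP1def
    set P2 := gegenRec lam (k+2) x with hP2def
    set P3 := gegenRec lam (k+3) x with hP3def
    set ρ₂ := rhoP lam x s ((k:ℝ)+2) with hρ₂def
    have hdiv : P1/P2 = (P1*P2)/(P2*P2) := by
      rw [mul_div_mul_right _ _ hP2ne]
    have hrle : P1/P2 ≤ ρ₂ := by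
      rw [hdiv, div_le_iff₀ hPP]
      nlinarith [hle]
    have hrpos : 0 < P1/P2 := by
      rw [hdiv]; exact div_pos hprod hPP
    have hrec3 : ((k:ℝ)+3)*P3 = 2*((k:ℝ)+2+lam)*x*P2 - ((k:ℝ)+1+2*lam)*P1 := by
      have e0 := gegenRec_ss lam (k+1) x
      simp only [show k+1+1 = k+2 from rfl, show k+1+2 = k+3 from rfl] at e0
      rw [hP3def, e0]
      push_cast
      have h3 : ((k:ℝ)+1+2) ≠ 0 := by positivity
      field_simp
      ring
    have hP1e : P1 = (P1/P2)*P2 := (div_mul_cancel₀ _ hP2ne).symm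
    have hEpos := gegen_E_pos hl hx hs hs0 hm
    have hstep := gegen_step hl hx hs hs0 hm
    have hrho3pos := rhoP_pos hl hx hs hs0 (show (2:ℝ) ≤ ((k:ℝ)+2)+1 by linarith)
    have hcpos : (0:ℝ) < (k:ℝ)+1+2*lam := by linarith
    have hprodnn : (0:ℝ) ≤ ((k:ℝ)+1+2*lam)*(ρ₂ - P1/P2) :=
      mul_nonneg hcpos.le (by linarith)
    have he_pos : 0 < 2*((k:ℝ)+2+lam)*x - ((k:ℝ)+1+2*lam)*(P1/P2) := by
      nlinarith [hEpos, hprodnn]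
    have h34 : ((k:ℝ)+3)*P3 = P2*(2*((k:ℝ)+2+lam)*x - ((k:ℝ)+1+2*lam)*(P1/P2)) := by
      rw [hrec3]
      nlinarith [hP1e]
    have hk3 : (0:ℝ) < (k:ℝ)+3 := by positivity
    have hP2sq : 0 < P2^2 := by nlinarith [hPP]
    have hnew_pos : 0 < P2 * P3 := by
      have h1 : 0 < P2^2 * (2*((k:ℝ)+2+lam)*x - ((k:ℝ)+1+2*lam)*(P1/P2)) :=
        mul_pos hP2sq he_pos
      have h35 : ((k:ℝ)+3)*(P2*P3) = P2^2 * (2*((k:ℝ)+2+lam)*x - ((k:ℝ)+1+2*lam)*(P1/P2)) := by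
        linear_combination P2*h34
      nlinarith [h35, h1, hk3]
    have hstep2 : (k:ℝ)+3 ≤ rhoP lam x s (((k:ℝ)+2)+1) *
        (2*((k:ℝ)+2+lam)*x - ((k:ℝ)+1+2*lam)*(P1/P2)) := by
      have hp2 : (0:ℝ) ≤ rhoP lam x s (((k:ℝ)+2)+1) * (((k:ℝ)+1+2*lam)*(ρ₂ - P1/P2)) :=
        mul_nonneg hrho3pos.le hprodnn
      nlinarith [hstep, hp2]
    constructor
    · exact hnew_pos
    · have harg : ((k:ℝ)+1)+2 = ((k:ℝ)+2)+1 := by ring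
      push_cast
      rw [harg]
      set ρ₃ := rhoP lam x s (((k:ℝ)+2)+1) with hρ₃def
      set e' := 2*((k:ℝ)+2+lam)*x - ((k:ℝ)+1+2*lam)*(P1/P2) with he'def
      have hkey : ((k:ℝ)+3)^2 * (ρ₃*P3^2 - P2*P3) = P2^2*e'*(ρ₃*e' - ((k:ℝ)+3)) := by
        linear_combination (ρ₃*(((k:ℝ)+3)*P3 + P2*e') - ((k:ℝ)+3)*P2) * h34
      have hpos2 : 0 ≤ P2^2*e'*(ρ₃*e' - ((k:ℝ)+3)) :=
        mul_nonneg (mul_nonneg hP2sq.le he_pos.le) (by linarith [hstep2])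
      nlinarith [hkey, hpos2, pow_pos hk3 2]

lemma cheb_ge_one : ∀ k : ℕ, 1 ≤ chebT k x ∧ chebT k x ≤ chebT (k+1) x := by
  intro k
  induction k with
  | zero =>
    constructor
    · simp [chebT]
    · simp [chebT]; linarith
  | succ k ih =>
    obtain ⟨h1, h2⟩ := ih
    refine ⟨by linarith, ?_⟩
    rw [chebT_ss]
    nlinarith

lemma cheb_inv : ∀ k : ℕ, chebT k x ≤ rhoT x s ((k:ℝ)+1) * chebT (k+1) x := by
  have hx0 : (0:ℝ) < x := by linarith
  have hxs : (0:ℝ) < x + s := by linarith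
  intro k
  induction k with
  | zero =>
    have h : rhoT x s ((0:ℝ)+1) * x = 1 := by
      rw [rhoT]
      norm_num
      field_simp
    simp only [Nat.cast_zero]
    rw [show chebT (0+1) x = x from rfl, show chebT 0 x = (1:ℝ) from rfl]
    linarith [h]
  | succ k ih =>
    have hm1 : (1:ℝ) ≤ (k:ℝ)+1 := by linarith [Nat.cast_nonneg (α := ℝ) k]
    have hT1pos : (0:ℝ) < chebT (k+1) x := by linarith [(cheb_ge_one hl hx hs hs0 (k+1)).1]
    have hstep := cheb_step hl hx hs hs0 hm1
    have hEpos := cheb_E_pos hl hx hs hs0 hm1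
    have hρ₂pos := rhoT_pos hl hx hs hs0 (show (1:ℝ) ≤ ((k:ℝ)+1)+1 by linarith)
    have hrec : chebT (k+2) x = 2*x*chebT (k+1) x - chebT k x := chebT_ss k x
    have harg : ((k:ℝ)+1)+1 = ((k:ℝ)+1)+1 := rfl
    push_cast
    rw [show (k:ℝ)+1+1 = ((k:ℝ)+1)+1 from by ring, hrec]
    have p1 : 0 ≤ rhoT x s (((k:ℝ)+1)+1) * (rhoT x s ((k:ℝ)+1) * chebT (k+1) x - chebT k x) :=
      mul_nonneg hρ₂pos.le (by linarith)
    have p2 : 0 ≤ (rhoT x s (((k:ℝ)+1)+1) * (2*x - rhoT x s ((k:ℝ)+1)) - 1) * chebT (k+1) x :=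
      mul_nonneg (by linarith) hT1pos.le
    nlinarith [p1, p2]

end Invariant

lemma cheb_main {x : ℝ} (hx : 1 < x) (n : ℕ) (hn : 1 ≤ n) :
    (n:ℝ)*(n:ℝ)/(x + ((n:ℝ)-1)*Real.sqrt (x^2-1)) ≤ chebT' n x / chebT n x := by
  set s := Real.sqrt (x^2-1) with hsdef
  have hl : -(1/2) < (0:ℝ) := by norm_num
  have hs : s^2 = x^2-1 := Real.sq_sqrt (by nlinarith)
  have hs0 : 0 < s := Real.sqrt_pos.mpr (by nlinarith)
  have hx0 : (0:ℝ) < x := by linarith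
  have hx2 : (0:ℝ) < x^2-1 := by nlinarith
  obtain ⟨k, rfl⟩ : ∃ k, n = k+1 := ⟨n-1, by omega⟩
  have hm1 : (1:ℝ) ≤ (k:ℝ)+1 := by linarith [Nat.cast_nonneg (α := ℝ) k]
  have ident := cheb_identity k x (by nlinarith)
  have hinv := cheb_inv hl hx hs hs0 k
  have hT1pos : (0:ℝ) < chebT (k+1) x := by linarith [(cheb_ge_one hl hx hs hs0 (k+1)).1]
  have hfin := cheb_final_id hl hx hs hs0 hm1
  have hD : (0:ℝ) < x + (((k:ℝ)+1)-1)*s := by nlinarith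
  push_cast
  rw [show (k:ℝ)+1-1 = ((k:ℝ)+1)-1 from by ring, div_le_div_iff₀ hD hT1pos]
  set T := chebT (k+1) x with hTdef
  set Tk := chebT k x with hTkdef
  set ρ := rhoT x s ((k:ℝ)+1) with hρdef
  set D := x + (((k:ℝ)+1)-1)*s with hDdef
  have s1 : chebT' (k+1) x * D * (x^2-1) = (((k:ℝ)+1)*(x*T - Tk))*D := by
    linear_combination D*ident
  have s2 : (((k:ℝ)+1)*(x*T - ρ*T))*D = (((k:ℝ)+1)*(((k:ℝ)+1)*(x^2-1)))*T := by
    linear_combination (((k:ℝ)+1)*T)*hfin + (((k:ℝ)+1)*((k:ℝ)+1)*T)*hs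
  have s3 : (((k:ℝ)+1)*D)*Tk ≤ (((k:ℝ)+1)*D)*(ρ*T) :=
    mul_le_mul_of_nonneg_left hinv (by positivity)
  have h4 : ((k:ℝ)+1)*((k:ℝ)+1)*T*(x^2-1) ≤ chebT' (k+1) x * D * (x^2-1) := by
    nlinarith [s1, s2, s3]
  have := le_of_mul_le_mul_right h4 hx2
  linarith [this]

lemma gegen_main {lam x : ℝ} (hl : -(1/2) < lam) (hl0 : lam ≠ 0) (hx : 1 < x)
    (n : ℕ) (hn : 1 ≤ n) :
    (n:ℝ)*((n:ℝ)+2*lam)/((2*lam+1)*x + ((n:ℝ)-1)*Real.sqrt (x^2-1)) ≤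
      gegen' lam n x / gegenRec lam n x := by
  set s := Real.sqrt (x^2-1) with hsdef
  have hs : s^2 = x^2-1 := Real.sq_sqrt (by nlinarith)
  have hs0 : 0 < s := Real.sqrt_pos.mpr (by nlinarith)
  have hx0 : (0:ℝ) < x := by linarith
  have hxs : (0:ℝ) < x+s := by linarith
  have hx2 : (0:ℝ) < x^2-1 := by nlinarith
  match n, hn with
  | 1, _ =>
    have hg : gegen' lam 1 x = 2*lam := rfl
    have hp : gegenRec lam 1 x = 2*lam*x := rfl
    rw [hg, hp]
    push_cast
    have h1 : (2*lam+1)*x + ((1:ℝ)-1)*s = (2*lam+1)*x := by ring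
    rw [h1]
    have : (1:ℝ)*(1+2*lam)/((2*lam+1)*x) = 2*lam/(2*lam*x) := by
      rw [div_eq_div_iff (ne_of_gt (show (0:ℝ) < (2*lam+1)*x by nlinarith)) (mul_ne_zero (mul_ne_zero two_ne_zero hl0) (ne_of_gt hx0))]
      ring
    rw [this]
  | (k+2), _ =>
    have hm : (2:ℝ) ≤ (k:ℝ)+2 := by linarith [Nat.cast_nonneg (α := ℝ) k]
    have ident := gegen_identity lam (k+1) x (by nlinarith)
    simp only [show k+1+1 = k+2 from rfl] at ident
    push_cast at ident
    obtain ⟨hprod, hle⟩ := gegen_inv hl hx hs hs0 hl0 k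
    have hfin := gegen_final_id hl hx hs hs0 hm
    have hP2ne : gegenRec lam (k+2) x ≠ 0 := right_ne_zero_of_mul (ne_of_gt hprod)
    have hPP : 0 < gegenRec lam (k+2) x * gegenRec lam (k+2) x := mul_self_pos.mpr hP2ne
    have hD : (0:ℝ) < (2*lam+1)*x + (((k:ℝ)+2)-1)*s := by nlinarith
    have hcD : (0:ℝ) ≤ ((k:ℝ)+1+2*lam)*((2*lam+1)*x + (((k:ℝ)+2)-1)*s) := by
      apply mul_nonneg (by linarith) hD.le
    push_cast
    rw [show (k:ℝ)+2-1 = ((k:ℝ)+2)-1 from by ring]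
    have hrw : gegen' lam (k+2) x / gegenRec lam (k+2) x =
        (gegen' lam (k+2) x * gegenRec lam (k+2) x) /
          (gegenRec lam (k+2) x * gegenRec lam (k+2) x) := by
      rw [mul_div_mul_right _ _ hP2ne]
    rw [hrw, div_le_div_iff₀ hD hPP]
    set g := gegen' lam (k+2) x with hgdef
    set P1 := gegenRec lam (k+1) x with hP1def
    set P2 := gegenRec lam (k+2) x with hP2def
    set ρ := rhoP lam x s ((k:ℝ)+2) with hρdef
    set D := (2*lam+1)*x + (((k:ℝ)+2)-1)*s with hDdef
    have s1 : g*P2*D*(x^2-1) = (((k:ℝ)+2)*x*P2^2 - ((k:ℝ)+1+2*lam)*(P1*P2))*D := by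
      linear_combination (P2*D)*ident
    have s2 : ((k:ℝ)+2)*(((k:ℝ)+2)+2*lam)*P2^2*(x^2-1) =
        (((k:ℝ)+2)*x*P2^2 - ((k:ℝ)+1+2*lam)*(ρ*P2^2))*D := by
      linear_combination (-(P2^2))*hfin + (-((((k:ℝ)+2)*(((k:ℝ)+2)+2*lam))*P2^2))*hs
    have s3 : (((k:ℝ)+1+2*lam)*D)*(P1*P2) ≤ (((k:ℝ)+1+2*lam)*D)*(ρ*P2^2) :=
      mul_le_mul_of_nonneg_left hle (by nlinarith [hcD])
    have h4 : ((k:ℝ)+2)*(((k:ℝ)+2)+2*lam)*P2^2*(x^2-1) ≤ g*P2*D*(x^2-1) := by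
      nlinarith [s1, s2, s3]
    have h5 := le_of_mul_le_mul_right h4 hx2
    nlinarith [h5]

lemma limit_helper (F G : ℝ → ℝ) (hF : ContinuousAt F 1) (hG : ContinuousAt G 1)
    (h : ∀ y : ℝ, 1 < y → G y ≤ F y) : G 1 ≤ F 1 := by
  have ht : Filter.Tendsto (fun y => F y - G y) (nhdsWithin 1 (Set.Ioi 1))
      (nhds (F 1 - G 1)) :=
    ((hF.sub hG).tendsto).mono_left nhdsWithin_le_nhds
  have hev : ∀ᶠ y in nhdsWithin 1 (Set.Ioi 1), 0 ≤ F y - G y :=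
    Filter.eventually_of_mem self_mem_nhdsWithin (fun y hy => sub_nonneg.2 (h y hy))
  have := ge_of_tendsto ht hev
  linarith

theorem ultra_ratio_lower_bound (n : ℕ) (hn : 1 ≤ n) (lam : ℝ) (hlam : -(1 / 2) < lam)
    (x : ℝ) (hx : 1 ≤ x) :
    uRatio lam n x ≥
      (n : ℝ) * ((n : ℝ) + 2 * lam) /
        ((2 * lam + 1) * x + ((n : ℝ) - 1) * Real.sqrt (x ^ 2 - 1)) := by
  by_cases hl0 : lam = 0
  · subst hl0
    have hueq : uRatio 0 n = fun y => chebT' n y / chebT n y := by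
      funext y
      simp only [uRatio, ultra, eq_self_iff_true, if_true]
      rw [show deriv (chebT n) = chebT' n from funext fun z => (chebT_hasDerivAt n z).deriv]
    simp only [hueq]
    norm_num
    rcases hx.eq_or_lt with heq | hgt
    · subst heq
      have hF : ContinuousAt (fun y => chebT' n y / chebT n y) 1 :=
        ContinuousAt.div (chebT_cont n).2.continuousAt (chebT_cont n).1.continuousAt
          (by rw [chebT_one]; norm_num)
      have hG : ContinuousAt
          (fun y => (n:ℝ)*(n:ℝ)/(y + ((n:ℝ)-1)*Real.sqrt (y^2-1))) 1 := by
        apply ContinuousAt.div continuousAt_const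
        · exact (continuous_id.add (continuous_const.mul
            (Real.continuous_sqrt.comp ((continuous_pow 2).sub continuous_const)))).continuousAt
        · norm_num
      exact limit_helper _ _ hF hG (fun y hy => cheb_main hy n hn)
    · exact cheb_main hgt n hn
  · have hueq : uRatio lam n = fun y => gegen' lam n y / gegenRec lam n y := by
      funext y
      simp only [uRatio, ultra, if_neg hl0]
      rw [show deriv (gegenRec lam n) = gegen' lam n from
        funext fun z => (gegen_hasDerivAt lam n z).deriv]
    simp only [hueq]
    rcases hx.eq_or_lt with heq | hgt
    · subst heq
      have hF : ContinuousAt (fun y => gegen' lam n y / gegenRec lam n y) 1 :=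
        ContinuousAt.div (gegen_cont lam n).2.continuousAt (gegen_cont lam n).1.continuousAt
          (gegen_one_ne lam hlam hl0 n)
      have hG : ContinuousAt (fun y =>
          (n:ℝ)*((n:ℝ)+2*lam)/((2*lam+1)*y + ((n:ℝ)-1)*Real.sqrt (y^2-1))) 1 := by
        apply ContinuousAt.div continuousAt_const
        · exact ((continuous_const.mul continuous_id).add (continuous_const.mul
            (Real.continuous_sqrt.comp ((continuous_pow 2).sub continuous_const)))).continuousAt
        · have : ((1:ℝ)^2 - 1) = 0 := by norm_num
          rw [this, Real.sqrt_zero]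
          norm_num
          linarith
      exact limit_helper _ _ hF hG (fun y hy => gegen_main hlam hl0 hy n hn)
    · exact gegen_main hlam hl0 hgt n hn
end

section
/- Let n ∈ ℕ, n ≥ 1, and λ > -1/2. Then for every real x ≥ 1, u_n(x) = (P_n^{(λ)})'(x)/P_n^{(λ)}(x) ≥ n(1/x + (n-1)/(2(n+λ-1)x³)). -/
noncomputable def Qg (lam : ℝ) : ℕ → ℝ → ℝ
  | 0 => fun _ => 1
  | 1 => fun x => x
  | n + 2 => fun x =>
      (2 * ((n : ℝ) + 1 + lam) * x * Qg lam (n + 1) x - ((n : ℝ) + 1) * Qg lam n x) /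
        ((n : ℝ) + 1 + 2 * lam)

noncomputable def Qd (lam : ℝ) : ℕ → ℝ → ℝ
  | 0 => fun _ => 0
  | 1 => fun _ => 1
  | n + 2 => fun x =>
      (2 * ((n : ℝ) + 1 + lam) * (Qg lam (n + 1) x + x * Qd lam (n + 1) x) -
        ((n : ℝ) + 1) * Qd lam n x) / ((n : ℝ) + 1 + 2 * lam)

lemma hasDerivQ (lam : ℝ) : ∀ n x, HasDerivAt (Qg lam n) (Qd lam n x) x := by
  intro n
  induction n using Nat.twoStepInduction with
  | zero => intro x; simpa [Qg, Qd] using (hasDerivAt_const x (1:ℝ))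
  | one => intro x; exact hasDerivAt_id' x
  | more n ih0 ih1 =>
    intro x
    have h1 : HasDerivAt (fun y => 2 * ((n : ℝ) + 1 + lam) * y * Qg lam (n + 1) y)
        (2 * ((n : ℝ) + 1 + lam) * (Qg lam (n + 1) x + x * Qd lam (n + 1) x)) x := by
      have := ((hasDerivAt_id x).mul (ih1 x)).const_mul (2 * ((n : ℝ) + 1 + lam))
      simp only [id_eq, one_mul] at this
      exact this.congr_of_eventuallyEq
        (Filter.Eventually.of_forall fun y => by simp only [Pi.mul_apply, id_eq]; ring)
    have h2 := (h1.sub ((ih0 x).const_mul ((n : ℝ) + 1))).div_const ((n : ℝ) + 1 + 2 * lam)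
    have : Qg lam (n + 2) = fun y =>
        (2 * ((n : ℝ) + 1 + lam) * y * Qg lam (n + 1) y - ((n : ℝ) + 1) * Qg lam n y) /
        ((n : ℝ) + 1 + 2 * lam) := rfl
    rw [this, Qd]
    exact h2

lemma star (lam : ℝ) (hlam : -(1/2) < lam) :
    ∀ n (x : ℝ), (x^2 - 1) * Qd lam (n+1) x = ((n:ℝ)+1) * (x * Qg lam (n+1) x - Qg lam n x) := by
  have key : ∀ n, (∀ x : ℝ, (x^2 - 1) * Qd lam (n+1) x
        = ((n:ℝ)+1) * (x * Qg lam (n+1) x - Qg lam n x)) ∧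
      (∀ x : ℝ, (x^2 - 1) * Qd lam (n+2) x
        = ((n:ℝ)+2) * (x * Qg lam (n+2) x - Qg lam (n+1) x)) := by
    intro n
    induction n with
    | zero =>
      constructor
      · intro x; simp [Qg, Qd]; ring
      · intro x
        have h1 : (1:ℝ) + 2*lam ≠ 0 := ne_of_gt (by linarith)
        have h2 : (0:ℝ) + 1 + 2*lam ≠ 0 := by simpa using h1
        have h3 : (1:ℝ) + lam*2 ≠ 0 := by
          intro h; exact h1 (by linarith)
        simp only [Qd, Qg, Nat.cast_zero]
        field_simp
        ring
    | succ n ih =>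
      obtain ⟨ih0, ih1⟩ := ih
      have hn : (0:ℝ) ≤ (n:ℝ) := Nat.cast_nonneg n
      constructor
      · intro x
        rw [show ((n+1:ℕ):ℝ)+1 = (n:ℝ)+2 by push_cast; ring]
        exact ih1 x
      · intro x
        have hne0 : ((n:ℝ)+1+2*lam) ≠ 0 := ne_of_gt (by linarith)
        have hne1 : ((n:ℝ)+1+1+2*lam) ≠ 0 := ne_of_gt (by linarith)
        have hd3 : Qd lam (n+3) x = (2 * ((↑(n+1):ℝ) + 1 + lam) *
            (Qg lam (n+2) x + x * Qd lam (n+2) x) -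
            ((↑(n+1):ℝ) + 1) * Qd lam (n+1) x) / ((↑(n+1):ℝ) + 1 + 2 * lam) := rfl
        have hq3 : Qg lam (n+3) x = (2 * ((↑(n+1):ℝ) + 1 + lam) * x * Qg lam (n+2) x -
            ((↑(n+1):ℝ) + 1) * Qg lam (n+1) x) / ((↑(n+1):ℝ) + 1 + 2 * lam) := rfl
        have hq2 : Qg lam (n+2) x = (2 * ((n:ℝ) + 1 + lam) * x * Qg lam (n+1) x -
            ((n:ℝ) + 1) * Qg lam n x) / ((n:ℝ) + 1 + 2 * lam) := rfl
        push_cast at hd3 hq3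
        rw [eq_div_iff hne1] at hd3 hq3
        rw [eq_div_iff hne0] at hq2
        rw [show ((n+1:ℕ):ℝ)+2 = (n:ℝ)+3 by push_cast; ring]
        show (x^2 - 1) * Qd lam (n+3) x = ((n:ℝ)+3) * (x * Qg lam (n+3) x - Qg lam (n+2) x)
        have hbig : ((n:ℝ)+1+1+2*lam) * ((x^2 - 1) * Qd lam (n+3) x)
            = ((n:ℝ)+1+1+2*lam) * (((n:ℝ)+3) * (x * Qg lam (n+3) x - Qg lam (n+2) x)) := by
          linear_combination (x^2-1) * hd3 + (2*((n:ℝ)+2+lam)*x) * ih1 x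
            - ((n:ℝ)+2) * ih0 x - (((n:ℝ)+3)*x) * hq3 + ((n:ℝ)+2) * hq2
        exact mul_left_cancel₀ hne1 hbig
  intro n
  rcases n with _ | n
  · exact (key 0).1
  · rw [show ((n+1:ℕ):ℝ)+1 = (n:ℝ)+2 by push_cast; ring]
    exact fun x => (key n).2 x

lemma Qg_one (lam : ℝ) (hlam : -(1/2) < lam) : ∀ n, Qg lam n 1 = 1 := by
  intro n
  induction n using Nat.twoStepInduction with
  | zero => rfl
  | one => rfl
  | more n ih0 ih1 =>
    have hn : (0:ℝ) ≤ (n:ℝ) := Nat.cast_nonneg n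
    have hne : ((n:ℝ)+1+2*lam) ≠ 0 := ne_of_gt (by linarith)
    show (2 * ((n : ℝ) + 1 + lam) * 1 * Qg lam (n + 1) 1 - ((n : ℝ) + 1) * Qg lam n 1) /
        ((n : ℝ) + 1 + 2 * lam) = 1
    rw [ih1, ih0]
    field_simp
    ring

lemma Qd_one (lam : ℝ) (hlam : -(1/2) < lam) :
    ∀ n, Qd lam n 1 = (n:ℝ) * ((n:ℝ) + 2*lam) / (1 + 2*lam) := by
  have h12 : (1:ℝ) + 2*lam ≠ 0 := ne_of_gt (by linarith)
  intro n
  induction n using Nat.twoStepInduction with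
  | zero => simp [Qd]
  | one =>
    show (1:ℝ) = _
    rw [Nat.cast_one]
    field_simp
  | more n ih0 ih1 =>
    have hn : (0:ℝ) ≤ (n:ℝ) := Nat.cast_nonneg n
    have hne : ((n:ℝ)+1+2*lam) ≠ 0 := ne_of_gt (by linarith)
    show (2 * ((n : ℝ) + 1 + lam) * (Qg lam (n + 1) 1 + 1 * Qd lam (n + 1) 1) -
        ((n : ℝ) + 1) * Qd lam n 1) / ((n : ℝ) + 1 + 2 * lam) = _
    rw [ih1, ih0, Qg_one lam hlam]
    push_cast
    field_simp
    ring

set_option maxHeartbeats 1000000 in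
lemma keyineq (lam : ℝ) (hlam : -(1/2) < lam) (m : ℕ) (x : ℝ) (hx : 1 ≤ x) :
    ((m:ℝ)+1+2*lam) * x^6 ≤
      (x^2 - (((m:ℝ)+1)/(2*((m:ℝ)+1+lam)))*(x^2-1)) *
        (2*((m:ℝ)+1+lam)*x^4 - ((m:ℝ)+1)*(x^2 - ((m:ℝ)/(2*((m:ℝ)+lam)))*(x^2-1))) := by
  have ht : (0:ℝ) ≤ x^2 - 1 := by nlinarith
  rcases m with _ | k
  · -- m = 0
    have hA : (0:ℝ) < 2*(1+lam) := by linarith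
    have hA' : (2*(1+lam)) ≠ 0 := ne_of_gt hA
    simp only [Nat.cast_zero, zero_div, zero_add, zero_mul, sub_zero]
    have e : (2*((0:ℝ)+1+lam)) *
        ((x^2 - (((0:ℝ)+1)/(2*((0:ℝ)+1+lam)))*(x^2-1)) * (2*((0:ℝ)+1+lam)*x^4 - ((0:ℝ)+1)*x^2)
          - ((0:ℝ)+1+2*lam) * x^6) = (x^2-1) + (x^2-1)^2 := by
      have hA'' : (1+lam) ≠ 0 := ne_of_gt (by linarith)
      simp only [zero_add]
      field_simp
      ring
    nlinarith [e, ht, sq_nonneg (x^2-1)]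
  · -- m = k+1
    push_cast
    have hk : (0:ℝ) ≤ (k:ℝ) := Nat.cast_nonneg k
    have hA : (0:ℝ) < 2*((k:ℝ)+1+lam) := by linarith
    have hA' : (0:ℝ) < 2*((k:ℝ)+1+1+lam) := by linarith
    have e : (2*((k:ℝ)+1+lam)) * (2*((k:ℝ)+1+1+lam)) *
        ((x^2 - (((k:ℝ)+1+1)/(2*((k:ℝ)+1+1+lam)))*(x^2-1)) *
          (2*((k:ℝ)+1+1+lam)*x^4
            - ((k:ℝ)+1+1)*(x^2 - (((k:ℝ)+1)/(2*((k:ℝ)+1+lam)))*(x^2-1)))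
          - ((k:ℝ)+1+1+2*lam) * x^6)
        = (x^2-1)*(((k:ℝ)+2)*(2*((k:ℝ)+1)*(2*((k:ℝ)+2+lam)) + 2*lam))
          + (x^2-1)^2*(((k:ℝ)+2)*(3*((k:ℝ)+1)*((k:ℝ)+2) + 2*lam*(1+2*((k:ℝ)+1)))) := by
      have h1 : 2*((k:ℝ)+1+lam) ≠ 0 := ne_of_gt hA
      have h2 : 2*((k:ℝ)+1+1+lam) ≠ 0 := ne_of_gt hA'
      have h1' : (k:ℝ)+1+lam ≠ 0 := ne_of_gt (by linarith)
      have h2' : (k:ℝ)+1+1+lam ≠ 0 := ne_of_gt (by linarith)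
      field_simp
      ring
    have hl2 : (0:ℝ) ≤ lam + 1/2 := by linarith
    have hkk : (0:ℝ) ≤ (k:ℝ)*(k:ℝ) := mul_nonneg hk hk
    have hc1 : (0:ℝ) ≤ ((k:ℝ)+2)*(2*((k:ℝ)+1)*(2*((k:ℝ)+2+lam)) + 2*lam) := by
      nlinarith [mul_nonneg hkk hk, hkk, hk, mul_nonneg hkk hl2, mul_nonneg hk hl2, hl2]
    have hc2 : (0:ℝ) ≤ ((k:ℝ)+2)*(3*((k:ℝ)+1)*((k:ℝ)+2) + 2*lam*(1+2*((k:ℝ)+1))) := by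
      nlinarith [mul_nonneg hkk hk, hkk, hk, mul_nonneg hkk hl2, mul_nonneg hk hl2, hl2]
    have hS : (0:ℝ) ≤ (x^2-1)*(((k:ℝ)+2)*(2*((k:ℝ)+1)*(2*((k:ℝ)+2+lam)) + 2*lam))
          + (x^2-1)^2*(((k:ℝ)+2)*(3*((k:ℝ)+1)*((k:ℝ)+2) + 2*lam*(1+2*((k:ℝ)+1)))) :=
      add_nonneg (mul_nonneg ht hc1) (mul_nonneg (sq_nonneg _) hc2)
    rw [← e] at hS
    have hD := (mul_nonneg_iff_of_pos_left (mul_pos hA hA')).mp hS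
    linarith [hD]

lemma inv_main (lam : ℝ) (hlam : -(1/2) < lam) (x : ℝ) (hx : 1 ≤ x) :
    ∀ m : ℕ, 0 < Qg lam (m+1) x ∧
      x^3 * Qg lam m x ≤ (x^2 - ((m:ℝ)/(2*((m:ℝ)+lam)))*(x^2-1)) * Qg lam (m+1) x := by
  have hx0 : (0:ℝ) < x := lt_of_lt_of_le one_pos hx
  have ht : (0:ℝ) ≤ x^2 - 1 := by nlinarith
  intro m
  induction m with
  | zero =>
    refine ⟨by show (0:ℝ) < x; linarith, ?_⟩
    show x^3 * 1 ≤ (x^2 - ((0:ℕ):ℝ)/(2*(((0:ℕ):ℝ)+lam))*(x^2-1)) * x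
    norm_num
    exact le_of_eq (by ring)
  | succ m ih =>
    obtain ⟨h1, h2⟩ := ih
    have hm : (0:ℝ) ≤ (m:ℝ) := Nat.cast_nonneg m
    have hc : (0:ℝ) < (m:ℝ)+1+2*lam := by linarith
    have hA' : (0:ℝ) < 2*((m:ℝ)+1+lam) := by linarith
    have hb'0 : (0:ℝ) ≤ ((m:ℝ)+1)/(2*((m:ℝ)+1+lam)) :=
      div_nonneg (by linarith) (le_of_lt hA')
    have hb'1 : ((m:ℝ)+1)/(2*((m:ℝ)+1+lam)) < 1 := (div_lt_one hA').2 (by linarith)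
    obtain ⟨P', hP'def⟩ : ∃ p : ℝ, p = x^2 - (((m:ℝ)+1)/(2*((m:ℝ)+1+lam)))*(x^2-1) :=
      ⟨_, rfl⟩
    have hP' : (0:ℝ) < P' := by rw [hP'def]; nlinarith [hb'0, hb'1, ht]
    have hrec : Qg lam (m+2) x * ((m:ℝ)+1+2*lam)
        = 2*((m:ℝ)+1+lam)*x*Qg lam (m+1) x - ((m:ℝ)+1)*Qg lam m x := by
      have hq : Qg lam (m+2) x = (2 * ((m : ℝ) + 1 + lam) * x * Qg lam (m + 1) x -
          ((m : ℝ) + 1) * Qg lam m x) / ((m : ℝ) + 1 + 2 * lam) := rfl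
      rw [hq, div_mul_cancel₀ _ (ne_of_gt hc)]
    have hkey := keyineq lam hlam m x hx
    have step1 : ((m:ℝ)+1+2*lam) * x^3 * (P' * Qg lam (m+2) x)
        = P' * x^3 * (2*((m:ℝ)+1+lam)*x*Qg lam (m+1) x - ((m:ℝ)+1)*Qg lam m x) := by
      calc ((m:ℝ)+1+2*lam) * x^3 * (P' * Qg lam (m+2) x)
          = P' * x^3 * (Qg lam (m+2) x * ((m:ℝ)+1+2*lam)) := by ring
        _ = _ := by rw [hrec]
    have hmul : P' * ((m:ℝ)+1) * (x^3*Qg lam m x)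
        ≤ P' * ((m:ℝ)+1) * ((x^2 - ((m:ℝ)/(2*((m:ℝ)+lam)))*(x^2-1)) * Qg lam (m+1) x) :=
      mul_le_mul_of_nonneg_left h2 (mul_nonneg (le_of_lt hP') (by linarith))
    have e2 : P' * x^3 * (2*((m:ℝ)+1+lam)*x*Qg lam (m+1) x - ((m:ℝ)+1)*Qg lam m x)
        = P' * (2*((m:ℝ)+1+lam)*x^4*Qg lam (m+1) x)
          - P' * ((m:ℝ)+1) * (x^3*Qg lam m x) := by ring
    have e3 : P' * (2*((m:ℝ)+1+lam)*x^4*Qg lam (m+1) x)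
          - P' * ((m:ℝ)+1) * ((x^2 - ((m:ℝ)/(2*((m:ℝ)+lam)))*(x^2-1)) * Qg lam (m+1) x)
        = Qg lam (m+1) x * ((x^2 - (((m:ℝ)+1)/(2*((m:ℝ)+1+lam)))*(x^2-1)) *
            (2*((m:ℝ)+1+lam)*x^4 - ((m:ℝ)+1)*(x^2 - ((m:ℝ)/(2*((m:ℝ)+lam)))*(x^2-1)))) := by
      rw [hP'def]; ring
    have step4 : Qg lam (m+1) x * (((m:ℝ)+1+2*lam) * x^6)
        ≤ Qg lam (m+1) x * ((x^2 - (((m:ℝ)+1)/(2*((m:ℝ)+1+lam)))*(x^2-1)) *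
            (2*((m:ℝ)+1+lam)*x^4 - ((m:ℝ)+1)*(x^2 - ((m:ℝ)/(2*((m:ℝ)+lam)))*(x^2-1)))) :=
      mul_le_mul_of_nonneg_left hkey (le_of_lt h1)
    have e4 : Qg lam (m+1) x * (((m:ℝ)+1+2*lam) * x^6)
        = ((m:ℝ)+1+2*lam) * x^3 * (x^3 * Qg lam (m+1) x) := by ring
    have final1 : ((m:ℝ)+1+2*lam) * x^3 * (x^3 * Qg lam (m+1) x)
        ≤ ((m:ℝ)+1+2*lam) * x^3 * (P' * Qg lam (m+2) x) := by
      linarith [step1, hmul, e2, e3, step4, e4]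
    have hcx : (0:ℝ) < ((m:ℝ)+1+2*lam) * x^3 := mul_pos hc (pow_pos hx0 3)
    have hfinal : x^3 * Qg lam (m+1) x ≤ P' * Qg lam (m+2) x :=
      le_of_mul_le_mul_left final1 hcx
    have hq2pos : 0 < Qg lam (m+2) x := by
      have hpos : 0 < P' * Qg lam (m+2) x :=
        lt_of_lt_of_le (mul_pos (pow_pos hx0 3) h1) hfinal
      rcases mul_pos_iff.mp hpos with ⟨_, h⟩ | ⟨h, _⟩
      · exact h
      · linarith
    refine ⟨hq2pos, ?_⟩
    rw [show ((m+1:ℕ):ℝ) = (m:ℝ)+1 by push_cast; ring, ← hP'def]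
    exact hfinal

lemma chebT_eq_Qg : ∀ n, chebT n = Qg 0 n := by
  intro n
  induction n using Nat.twoStepInduction with
  | zero => rfl
  | one => rfl
  | more n ih0 ih1 =>
    funext x
    have hne : ((n:ℝ)+1) ≠ 0 := by positivity
    show 2 * x * chebT (n + 1) x - chebT n x
      = (2 * ((n : ℝ) + 1 + 0) * x * Qg 0 (n + 1) x - ((n : ℝ) + 1) * Qg 0 n x) /
        ((n : ℝ) + 1 + 2 * 0)
    rw [ih0, ih1]
    field_simp
    ring

noncomputable def gc (lam : ℝ) : ℕ → ℝ
  | 0 => 1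
  | n + 1 => gc lam n * (2*lam + (n:ℝ)) / ((n:ℝ)+1)

lemma gc_ne (lam : ℝ) (hlam : -(1/2) < lam) (h0 : lam ≠ 0) : ∀ n, gc lam n ≠ 0 := by
  intro n
  induction n with
  | zero => exact one_ne_zero
  | succ n ih =>
    have h2 : (2*lam + (n:ℝ)) ≠ 0 := by
      rcases Nat.eq_zero_or_pos n with rfl | hn
      · simpa using mul_ne_zero two_ne_zero h0
      · have : (1:ℝ) ≤ (n:ℝ) := Nat.one_le_cast.mpr hn
        exact ne_of_gt (by linarith)
    have h3 : ((n:ℝ)+1) ≠ 0 := by positivity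
    show gc lam n * (2*lam + (n:ℝ)) / ((n:ℝ)+1) ≠ 0
    exact div_ne_zero (mul_ne_zero ih h2) h3

lemma gegen_eq (lam : ℝ) (hlam : -(1/2) < lam) :
    ∀ n (x : ℝ), gegenRec lam n x = gc lam n * Qg lam n x := by
  have key : ∀ n, (∀ x : ℝ, gegenRec lam n x = gc lam n * Qg lam n x) ∧
      (∀ x : ℝ, gegenRec lam (n+1) x = gc lam (n+1) * Qg lam (n+1) x) := by
    intro n
    induction n with
    | zero =>
      constructor
      · intro x; show (1:ℝ) = gc lam 0 * 1; simp [gc]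
      · intro x
        show 2 * lam * x = gc lam 1 * x
        show 2 * lam * x = (gc lam 0 * (2*lam + ((0:ℕ):ℝ)) / (((0:ℕ):ℝ)+1)) * x
        show 2 * lam * x = ((1:ℝ) * (2*lam + ((0:ℕ):ℝ)) / (((0:ℕ):ℝ)+1)) * x
        norm_num
    | succ n ih =>
      obtain ⟨ih0, ih1⟩ := ih
      refine ⟨ih1, fun x => ?_⟩
      have hn : (0:ℝ) ≤ (n:ℝ) := Nat.cast_nonneg n
      have hne : ((n:ℝ)+1+2*lam) ≠ 0 := ne_of_gt (by linarith)
      have h1 : ((n:ℝ)+1) ≠ 0 := by positivity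
      have h2 : ((n:ℝ)+2) ≠ 0 := by positivity
      show (2 * ((n : ℝ) + 1 + lam) * x * gegenRec lam (n + 1) x -
          ((n : ℝ) + 2 * lam) * gegenRec lam n x) / ((n : ℝ) + 2)
        = gc lam (n+2) * Qg lam (n+2) x
      have hgc2 : gc lam (n+2) = gc lam (n+1) * (2*lam + ((n+1:ℕ):ℝ)) / (((n+1:ℕ):ℝ)+1) := rfl
      have hgc1 : gc lam (n+1) = gc lam n * (2*lam + (n:ℝ)) / ((n:ℝ)+1) := rfl
      have hq2 : Qg lam (n+2) x = (2 * ((n : ℝ) + 1 + lam) * x * Qg lam (n+1) x -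
          ((n : ℝ) + 1) * Qg lam n x) / ((n : ℝ) + 1 + 2 * lam) := rfl
      rw [ih0 x, ih1 x, hq2, hgc2, hgc1]
      push_cast
      field_simp
      ring
  intro n
  rcases n with _ | n
  · exact (key 0).1
  · exact (key n).2

lemma uRatio_eq (lam : ℝ) (hlam : -(1/2) < lam) (n : ℕ) (x : ℝ) :
    uRatio lam n x = Qd lam n x / Qg lam n x := by
  obtain ⟨c, hc, hcq⟩ : ∃ c : ℝ, c ≠ 0 ∧ ultra lam n = fun y => c * Qg lam n y := by
    by_cases h : lam = 0
    · subst h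
      refine ⟨1, one_ne_zero, ?_⟩
      funext y
      simp [ultra, chebT_eq_Qg n]
    · refine ⟨gc lam n, gc_ne lam hlam h n, ?_⟩
      funext y
      simp only [ultra, if_neg h]
      exact gegen_eq lam hlam n y
  have hd : deriv (ultra lam n) x = c * Qd lam n x := by
    rw [hcq]
    exact ((hasDerivQ lam n x).const_mul c).deriv
  have hu : ultra lam n x = c * Qg lam n x := by rw [hcq]
  rw [uRatio, hd, hu, mul_div_mul_left _ _ hc]

lemma one_case (lam : ℝ) (hlam : -(1/2) < lam) (m : ℕ) (hm1 : 1 ≤ m) :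
    ((m:ℝ)+1)*(1 + (m:ℝ)/(2*((m:ℝ)+lam))) ≤ ((m:ℝ)+1)*((m:ℝ)+1+2*lam)/(1+2*lam) := by
  have hmr : (1:ℝ) ≤ (m:ℝ) := Nat.one_le_cast.mpr hm1
  have hp1 : (0:ℝ) < 2*((m:ℝ)+lam) := by linarith
  have hp2 : (0:ℝ) < 1+2*lam := by linarith
  have e : ((m:ℝ)+1)*((m:ℝ)+1+2*lam)/(1+2*lam) - ((m:ℝ)+1)*(1 + (m:ℝ)/(2*((m:ℝ)+lam)))
      = ((m:ℝ)+1)*(m:ℝ)*(2*(m:ℝ)-1)/((2*((m:ℝ)+lam))*(1+2*lam)) := by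
    have hp3 : (m:ℝ)+lam ≠ 0 := ne_of_gt (by linarith)
    field_simp
    ring
  have hnum : (0:ℝ) ≤ ((m:ℝ)+1)*(m:ℝ)*(2*(m:ℝ)-1) :=
    mul_nonneg (mul_nonneg (by linarith) (by linarith)) (by linarith)
  have hden : (0:ℝ) ≤ (2*((m:ℝ)+lam))*(1+2*lam) := le_of_lt (mul_pos hp1 hp2)
  have := div_nonneg hnum hden
  linarith [e, this]

theorem ultra_ratio_lower_bound_cubic (n : ℕ) (hn : 1 ≤ n) (lam : ℝ) (hlam : -(1 / 2) < lam)
    (x : ℝ) (hx : 1 ≤ x) :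
    uRatio lam n x ≥
      (n : ℝ) * (1 / x + ((n : ℝ) - 1) / (2 * ((n : ℝ) + lam - 1) * x ^ 3)) := by
  obtain ⟨m, rfl⟩ : ∃ m, n = m + 1 := ⟨n - 1, (Nat.succ_pred_eq_of_pos hn).symm⟩
  have hm : (0:ℝ) ≤ (m:ℝ) := Nat.cast_nonneg m
  have hx0 : (0:ℝ) < x := by linarith
  have h12 : (0:ℝ) < 1 + 2*lam := by linarith
  rw [ge_iff_le, uRatio_eq lam hlam]
  obtain ⟨hQpos, hIneq⟩ := inv_main lam hlam x hx m
  have hrw : ((m+1:ℕ):ℝ) * (1 / x + (((m+1:ℕ):ℝ) - 1) / (2 * (((m+1:ℕ):ℝ) + lam - 1) * x ^ 3))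
      = ((m:ℝ)+1) * (1/x + (m:ℝ)/((2*((m:ℝ)+lam))*x^3)) := by
    push_cast
    ring_nf
  rw [hrw]
  rcases eq_or_lt_of_le hx with hx1 | hx1
  · -- x = 1
    subst hx1
    rw [Qd_one lam hlam, Qg_one lam hlam]
    rcases Nat.eq_zero_or_pos m with rfl | hm1
    · norm_num
      rw [div_self (ne_of_gt h12)]
    · have h1 := one_case lam hlam m hm1
      have e1 : ((m:ℝ)+1) * (1/(1:ℝ) + (m:ℝ)/((2*((m:ℝ)+lam))*1^3))
          = ((m:ℝ)+1)*(1 + (m:ℝ)/(2*((m:ℝ)+lam))) := by norm_num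
      have e2 : ((m+1:ℕ):ℝ) * (((m+1:ℕ):ℝ) + 2*lam) / (1+2*lam) / 1
          = ((m:ℝ)+1)*((m:ℝ)+1+2*lam)/(1+2*lam) := by push_cast; ring
      rw [e1, e2]
      exact h1
  · -- x > 1
    have htpos : (0:ℝ) < x^2 - 1 := by nlinarith
    have hstar := star lam hlam m x
    have h6 : (x^2-1) * Qd lam (m+1) x * x^3
        = ((m:ℝ)+1)*(x^4 * Qg lam (m+1) x - x^3 * Qg lam m x) := by
      linear_combination x^3 * hstar
    have h7 : ((m:ℝ)+1)*(x^3 * Qg lam m x)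
        ≤ ((m:ℝ)+1)*((x^2 - ((m:ℝ)/(2*((m:ℝ)+lam)))*(x^2-1)) * Qg lam (m+1) x) :=
      mul_le_mul_of_nonneg_left hIneq (by linarith)
    have h8 : ((m:ℝ)+1)*(x^4 * Qg lam (m+1) x
          - (x^2 - ((m:ℝ)/(2*((m:ℝ)+lam)))*(x^2-1)) * Qg lam (m+1) x)
        = (x^2-1)*(((m:ℝ)+1)*((x^2 + (m:ℝ)/(2*((m:ℝ)+lam))) * Qg lam (m+1) x)) := by
      ring
    have hchain : (x^2-1)*(((m:ℝ)+1)*((x^2 + (m:ℝ)/(2*((m:ℝ)+lam))) * Qg lam (m+1) x))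
        ≤ (x^2-1)*(Qd lam (m+1) x * x^3) := by
      have : (x^2-1) * Qd lam (m+1) x * x^3 = (x^2-1)*(Qd lam (m+1) x * x^3) := by ring
      linarith [h6, h7, h8, this]
    have hchain2 : ((m:ℝ)+1)*((x^2 + (m:ℝ)/(2*((m:ℝ)+lam))) * Qg lam (m+1) x)
        ≤ Qd lam (m+1) x * x^3 := le_of_mul_le_mul_left hchain htpos
    rw [le_div_iff₀ hQpos]
    have e5 : ((m:ℝ)+1) * (1/x + (m:ℝ)/((2*((m:ℝ)+lam))*x^3)) * Qg lam (m+1) x * x^3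
        = ((m:ℝ)+1)*((x^2 + (m:ℝ)/(2*((m:ℝ)+lam))) * Qg lam (m+1) x) := by
      have h1x : (1/x) * x^3 = x^2 := by
        field_simp
      have h2x : (m:ℝ)/((2*((m:ℝ)+lam))*x^3)*x^3 = (m:ℝ)/(2*((m:ℝ)+lam)) := by
        rw [div_mul_eq_mul_div, mul_div_mul_right _ _ (ne_of_gt (pow_pos hx0 3))]
      linear_combination (((m:ℝ)+1) * Qg lam (m+1) x) * h1x
        + (((m:ℝ)+1) * Qg lam (m+1) x) * h2x
    have hx3 : (0:ℝ) < x^3 := pow_pos hx0 3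
    have := le_of_mul_le_mul_right (a := x^3)
      (by linarith [e5, hchain2] :
        ((m:ℝ)+1) * (1/x + (m:ℝ)/((2*((m:ℝ)+lam))*x^3)) * Qg lam (m+1) x * x^3
          ≤ Qd lam (m+1) x * x^3) hx3
    exact this
end
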